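/- arXiv:1903.09967 — 4 statements merged into one kernel-verified Lean document; each statement's English description precedes it below -/
import Mathlib

section
/- Mixed Hölder interpolation (Lemma 4.1(i)). Let d ≥ 1, θ ∈ [0,1] and β, γ > 0. There is a constant C = C(θ, γ, β) > 0 such that for every bounded function f : ℝ^d×ℝ^d → ℝ with ‖f‖_{C^γ_x} < ∞ and ‖f‖_{C^β_v} < ∞, one has sup_{h≠0, h'≠0} ‖δ_{h;1}^{[γ]+1} δ_{h';2}^{[β]+1} f‖_∞ / (|h|^{θγ}|h'|^{(1−θ)β}) ≤ C·‖f‖_{C^γ_x}^θ·‖f‖_{C^β_v}^{1−θ}. -/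
/- Mixed Hölder interpolation (Lemma 4.1(i)):
for θ ∈ [0,1], β, γ > 0 there is C = C(θ,γ,β) such that
sup_{h,h'≠0} ‖δ_{h;1}^{[γ]+1} δ_{h';2}^{[β]+1} f‖_∞ / (|h|^{θγ}|h'|^{(1−θ)β})
  ≤ C ‖f‖_{C^γ_x}^θ ‖f‖_{C^β_v}^{1−θ}. -/

open scoped ENNReal NNReal

noncomputable section

abbrev Ed (d : ℕ) : Type := EuclideanSpace ℝ (Fin d)

variable {V W F : Type*}

/-- first-order difference operator `δ_h f = f(·+h) − f(·)` -/
def dOp [AddGroup V] [AddGroup F] (h : V) (f : V → F) : V → F := fun x => f (x + h) - f x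

/-- sup-norm, valued in `ℝ≥0∞` -/
def supN [NormedAddCommGroup F] (f : V → F) : ℝ≥0∞ := ⨆ x, (‖f x‖₊ : ℝ≥0∞)

/-- Hölder–Zygmund seminorm `[f]_{C^s} = sup_{h≠0} ‖δ_h^{[s]+1} f‖_∞/|h|^s`,
where `[s]+1 = ⌈s⌉` for `s > 0`. -/
def zygSemi [NormedAddCommGroup V] [NormedAddCommGroup F] (s : ℝ) (f : V → F) : ℝ≥0∞ :=
  ⨆ (h : V) (_ : h ≠ 0), supN ((dOp h)^[⌈s⌉₊] f) / (‖h‖₊ : ℝ≥0∞) ^ s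

/-- Hölder–Zygmund norm `‖f‖_{C^s} = ‖f‖_∞ + [f]_{C^s}` -/
def holderN [NormedAddCommGroup V] [NormedAddCommGroup F] (s : ℝ) (f : V → F) : ℝ≥0∞ :=
  supN f + zygSemi s f

/-- difference operator in the first (x-)variable, for curried functions -/
def dX [AddGroup V] [AddGroup F] (h : V) (f : V → W → F) : V → W → F :=
  fun x v => f (x + h) v - f x v

/-- difference operator in the second (v-)variable, for curried functions -/
def dV [AddGroup W] [AddGroup F] (h : W) (f : V → W → F) : V → W → F :=
  fun x v => f x (v + h) - f x v

/-- sup-norm of a two-variable function -/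
def supN2 [NormedAddCommGroup F] (f : V → W → F) : ℝ≥0∞ := ⨆ x, ⨆ v, (‖f x v‖₊ : ℝ≥0∞)

/-- `‖f‖_{C^s_x} = sup_v ‖f(·,v)‖_{C^s}` -/
def holderX [NormedAddCommGroup V] [NormedAddCommGroup F] (s : ℝ) (f : V → W → F) : ℝ≥0∞ :=
  ⨆ v, holderN s (fun x => f x v)

/-- `‖f‖_{C^s_v} = sup_x ‖f(x,·)‖_{C^s}` -/
def holderV [NormedAddCommGroup W] [NormedAddCommGroup F] (s : ℝ) (f : V → W → F) : ℝ≥0∞ :=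
  ⨆ x, holderN s (f x)

section aux
variable [NormedAddCommGroup V] [NormedAddCommGroup W] [NormedAddCommGroup F]

lemma le_supN (f : V → F) (x : V) : (‖f x‖₊ : ℝ≥0∞) ≤ supN f :=
  le_iSup (fun x => (‖f x‖₊ : ℝ≥0∞)) x

lemma supN_le {f : V → F} {c} (hc : ∀ x, (‖f x‖₊ : ℝ≥0∞) ≤ c) : supN f ≤ c := iSup_le hc

lemma dOp_sub (h : V) (a b : V → F) : dOp h (a - b) = dOp h a - dOp h b := by
  funext x; simp only [dOp, Pi.sub_apply]; abel

lemma dOp_iterate_sub (h : V) (m : ℕ) (a b : V → F) :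
    (dOp h)^[m] (a - b) = (dOp h)^[m] a - (dOp h)^[m] b := by
  induction m generalizing a b with
  | zero => rfl
  | succ m ih => simp only [Function.iterate_succ_apply, dOp_sub, ih]

lemma supN_sub (a b : V → F) : supN (a - b) ≤ supN a + supN b :=
  supN_le fun x => by
    calc (‖(a - b) x‖₊ : ℝ≥0∞) ≤ (‖a x‖₊ : ℝ≥0∞) + ‖b x‖₊ := by
          rw [Pi.sub_apply]; exact_mod_cast nnnorm_sub_le (a x) (b x)
      _ ≤ supN a + supN b := add_le_add (le_supN a x) (le_supN b x)

lemma zygSemi_sub (s : ℝ) (a b : V → F) :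
    zygSemi s (a - b) ≤ zygSemi s a + zygSemi s b := by
  refine iSup₂_le fun h hh => ?_
  calc supN ((dOp h)^[⌈s⌉₊] (a - b)) / (‖h‖₊ : ℝ≥0∞) ^ s
      ≤ (supN ((dOp h)^[⌈s⌉₊] a) + supN ((dOp h)^[⌈s⌉₊] b)) / (‖h‖₊ : ℝ≥0∞) ^ s := by
        rw [dOp_iterate_sub]; exact ENNReal.div_le_div_right (supN_sub _ _) _
    _ = supN ((dOp h)^[⌈s⌉₊] a) / (‖h‖₊ : ℝ≥0∞) ^ s
        + supN ((dOp h)^[⌈s⌉₊] b) / (‖h‖₊ : ℝ≥0∞) ^ s := ENNReal.add_div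
    _ ≤ zygSemi s a + zygSemi s b := add_le_add
        (le_iSup₂ (f := fun h (_ : h ≠ 0) => supN ((dOp h)^[⌈s⌉₊] a) / (‖h‖₊ : ℝ≥0∞) ^ s) h hh)
        (le_iSup₂ (f := fun h (_ : h ≠ 0) => supN ((dOp h)^[⌈s⌉₊] b) / (‖h‖₊ : ℝ≥0∞) ^ s) h hh)

lemma supN_dOp_le (s : ℝ) {h : V} (hh : h ≠ 0) (g : V → F) :
    supN ((dOp h)^[⌈s⌉₊] g) ≤ zygSemi s g * (‖h‖₊ : ℝ≥0∞) ^ s := by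
  have hne : ((‖h‖₊ : ℝ≥0∞)) ^ s ≠ 0 := by
    simp [ENNReal.rpow_eq_zero_iff, hh]
  have htop : ((‖h‖₊ : ℝ≥0∞)) ^ s ≠ ⊤ := by
    simp [ENNReal.rpow_eq_top_iff, hh]
  have h1 : supN ((dOp h)^[⌈s⌉₊] g) / (‖h‖₊ : ℝ≥0∞) ^ s ≤ zygSemi s g :=
    le_iSup₂ (f := fun h (_ : h ≠ 0) => supN ((dOp h)^[⌈s⌉₊] g) / (‖h‖₊ : ℝ≥0∞) ^ s) h hh
  calc supN ((dOp h)^[⌈s⌉₊] g)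
      = supN ((dOp h)^[⌈s⌉₊] g) / (‖h‖₊ : ℝ≥0∞) ^ s * (‖h‖₊ : ℝ≥0∞) ^ s :=
        (ENNReal.div_mul_cancel hne htop).symm
    _ ≤ zygSemi s g * (‖h‖₊ : ℝ≥0∞) ^ s := mul_le_mul_left h1 _

lemma dX_iterate_slice (h : V) (f : V → W → F) (m : ℕ) (v : W) :
    (fun x => (dX h)^[m] f x v) = (dOp h)^[m] (fun x => f x v) := by
  induction m generalizing f with
  | zero => rfl
  | succ m ih =>
    rw [Function.iterate_succ_apply, Function.iterate_succ_apply, ih (dX h f)]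
    rfl

/-- swap the two arguments of a curried two-variable function -/
def swap2 (f : V → W → F) : W → V → F := fun v x => f x v

lemma swap2_dV (h : W) (f : V → W → F) :
    swap2 (dV h f) = dX h (swap2 f) := rfl
lemma swap2_dX (h : V) (f : V → W → F) :
    swap2 (dX h f) = dV h (swap2 f) := rfl

lemma swap2_dX_iterate (h : V) (m : ℕ) (f : V → W → F) :
    swap2 ((dX h)^[m] f) = (dV h)^[m] (swap2 f) := by
  induction m generalizing f with
  | zero => rfl
  | succ m ih =>
    rw [Function.iterate_succ_apply, Function.iterate_succ_apply, ih, swap2_dX]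

lemma swap2_dV_iterate (h : W) (n : ℕ) (f : V → W → F) :
    swap2 ((dV h)^[n] f) = (dX h)^[n] (swap2 f) := by
  induction n generalizing f with
  | zero => rfl
  | succ n ih =>
    rw [Function.iterate_succ_apply, Function.iterate_succ_apply, ih, swap2_dV]

lemma supN2_swap (f : V → W → F) : supN2 f = supN2 (swap2 f) := iSup_comm

lemma holderV_swap (s : ℝ) (f : V → W → F) : holderV s f = holderX s (swap2 f) := rfl

lemma dX_dV_comm (h : V) (h' : W) (f : V → W → F) : dX h (dV h' f) = dV h' (dX h f) := by
  funext x v; simp only [dX, dV]; abel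

lemma iterate_dX_dV_comm (h : V) (h' : W) (m n : ℕ) (f : V → W → F) :
    (dX h)^[m] ((dV h')^[n] f) = (dV h')^[n] ((dX h)^[m] f) := by
  have c : Function.Commute (dX (F := F) (W := W) h) (dV h') := fun g => dX_dV_comm h h' g
  exact ((c.iterate_left m).iterate_right n) f

lemma key1 (s : ℝ) (h' : W) (f : V → W → F) (n : ℕ) :
    ∀ v, zygSemi s (fun x => (dV h')^[n] f x v)
      ≤ 2 ^ n * ⨆ w, zygSemi s (fun x => f x w) := by
  induction n with
  | zero =>
    intro v
    simpa using le_iSup (fun w => zygSemi s (fun x => f x w)) v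
  | succ n ih =>
    intro v
    set G := (dV h')^[n] f with hG
    have hrw : (fun x => (dV h')^[n+1] f x v)
        = (fun x => G x (v + h')) - fun x => G x v := by
      funext x
      rw [Function.iterate_succ_apply']
      rfl
    rw [hrw]
    calc zygSemi s ((fun x => G x (v + h')) - fun x => G x v)
        ≤ zygSemi s (fun x => G x (v + h')) + zygSemi s (fun x => G x v) := zygSemi_sub s _ _
      _ ≤ 2 ^ n * (⨆ w, zygSemi s (fun x => f x w))
          + 2 ^ n * (⨆ w, zygSemi s (fun x => f x w)) := add_le_add (ih (v + h')) (ih v)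
      _ = 2 ^ (n+1) * ⨆ w, zygSemi s (fun x => f x w) := by ring

lemma estA (s : ℝ) {h : V} (hh : h ≠ 0) (h' : W) (n : ℕ) (f : V → W → F) :
    supN2 ((dX h)^[⌈s⌉₊] ((dV h')^[n] f)) ≤ 2 ^ n * holderX s f * (‖h‖₊ : ℝ≥0∞) ^ s := by
  refine iSup_le fun x => iSup_le fun v => ?_
  have hsl := dX_iterate_slice h ((dV h')^[n] f) ⌈s⌉₊ v
  have he : (‖(dX h)^[⌈s⌉₊] ((dV h')^[n] f) x v‖₊ : ℝ≥0∞)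
      = ‖(dOp h)^[⌈s⌉₊] (fun x => (dV h')^[n] f x v) x‖₊ := by rw [← hsl]
  rw [he]
  calc (‖(dOp h)^[⌈s⌉₊] (fun x => (dV h')^[n] f x v) x‖₊ : ℝ≥0∞)
      ≤ supN ((dOp h)^[⌈s⌉₊] (fun x => (dV h')^[n] f x v)) := le_supN _ x
    _ ≤ zygSemi s (fun x => (dV h')^[n] f x v) * (‖h‖₊ : ℝ≥0∞) ^ s := supN_dOp_le s hh _
    _ ≤ 2 ^ n * holderX s f * (‖h‖₊ : ℝ≥0∞) ^ s := by
        refine mul_le_mul_left ?_ _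
        refine (key1 s h' f n v).trans (mul_le_mul_right ?_ _)
        exact iSup_mono fun w => le_add_self

lemma estB (s : ℝ) {h' : W} (hh' : h' ≠ 0) (h : V) (m : ℕ) (f : V → W → F) :
    supN2 ((dX h)^[m] ((dV h')^[⌈s⌉₊] f)) ≤ 2 ^ m * holderV s f * (‖h'‖₊ : ℝ≥0∞) ^ s := by
  rw [iterate_dX_dV_comm, supN2_swap, swap2_dV_iterate, swap2_dX_iterate, holderV_swap]
  exact estA s hh' h m (swap2 f)

end aux

theorem mixed_holder_interpolation
    (d : ℕ) (hd : 1 ≤ d) (θ β γ : ℝ) (hθ : θ ∈ Set.Icc (0:ℝ) 1) (hβ : 0 < β) (hγ : 0 < γ) :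
    ∃ C > (0:ℝ), ∀ f : Ed d → Ed d → ℝ,
      holderX γ f ≠ ⊤ → holderV β f ≠ ⊤ →
      (⨆ (h : Ed d) (_ : h ≠ 0) (h' : Ed d) (_ : h' ≠ 0),
          supN2 ((dX h)^[⌈γ⌉₊] ((dV h')^[⌈β⌉₊] f)) /
            ((‖h‖₊ : ℝ≥0∞) ^ (θ * γ) * (‖h'‖₊ : ℝ≥0∞) ^ ((1 - θ) * β)))
        ≤ ENNReal.ofReal C * (holderX γ f) ^ θ * (holderV β f) ^ (1 - θ) := by
  obtain ⟨hθ0, hθ1⟩ := hθ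
  set m := ⌈γ⌉₊
  set n := ⌈β⌉₊
  refine ⟨2 ^ (n + m), by positivity, fun f hA hB => ?_⟩
  have hC : ENNReal.ofReal ((2:ℝ) ^ (n + m)) = (2 : ℝ≥0∞) ^ (n + m) := by
    rw [ENNReal.ofReal_pow (by norm_num)]
    norm_num
  set A := holderX γ f with hAdef
  set B := holderV β f with hBdef
  refine iSup₂_le fun h hh => iSup₂_le fun h' hh' => ?_
  set M := supN2 ((dX h)^[m] ((dV h')^[n] f)) with hM
  have e1 : M ≤ 2 ^ n * A * (‖h‖₊ : ℝ≥0∞) ^ γ := estA γ hh h' n f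
  have e2 : M ≤ 2 ^ m * B * (‖h'‖₊ : ℝ≥0∞) ^ β := estB β hh' h m f
  refine ENNReal.div_le_of_le_mul ?_
  rcases eq_or_ne M 0 with hM0 | hM0
  · rw [hM0]; exact zero_le
  have hhx : (‖h‖₊ : ℝ≥0∞) ^ γ ≠ ⊤ := by
    simp [ENNReal.rpow_eq_top_iff, hh, not_lt.2 hγ.le]
  have hMt : M ≠ ⊤ := by
    refine ne_top_of_le_ne_top ?_ e1
    exact ENNReal.mul_ne_top (ENNReal.mul_ne_top (by simp) hA) hhx
  have hsplit : M = M ^ θ * M ^ (1 - θ) := by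
    rw [← ENNReal.rpow_add θ (1 - θ) hM0 hMt]
    norm_num
  have hθ1' : (0:ℝ) ≤ 1 - θ := by linarith
  have p1 : M ^ θ ≤ 2 ^ n * A ^ θ * (‖h‖₊ : ℝ≥0∞) ^ (θ * γ) := by
    calc M ^ θ ≤ (2 ^ n * A * (‖h‖₊ : ℝ≥0∞) ^ γ) ^ θ := ENNReal.rpow_le_rpow e1 hθ0
      _ = ((2:ℝ≥0∞) ^ n) ^ θ * A ^ θ * ((‖h‖₊ : ℝ≥0∞) ^ γ) ^ θ := by
          rw [ENNReal.mul_rpow_of_nonneg _ _ hθ0, ENNReal.mul_rpow_of_nonneg _ _ hθ0]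
      _ ≤ 2 ^ n * A ^ θ * (‖h‖₊ : ℝ≥0∞) ^ (θ * γ) := by
          rw [← ENNReal.rpow_mul, mul_comm γ θ]
          refine mul_le_mul_left (mul_le_mul_left ?_ _) _
          calc ((2:ℝ≥0∞) ^ n) ^ θ ≤ ((2:ℝ≥0∞) ^ n) ^ (1:ℝ) :=
                ENNReal.rpow_le_rpow_of_exponent_le (one_le_pow_of_one_le' one_le_two n) hθ1
            _ = 2 ^ n := ENNReal.rpow_one _
  have p2 : M ^ (1 - θ) ≤ 2 ^ m * B ^ (1 - θ) * (‖h'‖₊ : ℝ≥0∞) ^ ((1 - θ) * β) := by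
    calc M ^ (1 - θ) ≤ (2 ^ m * B * (‖h'‖₊ : ℝ≥0∞) ^ β) ^ (1 - θ) := ENNReal.rpow_le_rpow e2 hθ1'
      _ = ((2:ℝ≥0∞) ^ m) ^ (1 - θ) * B ^ (1 - θ) * ((‖h'‖₊ : ℝ≥0∞) ^ β) ^ (1 - θ) := by
          rw [ENNReal.mul_rpow_of_nonneg _ _ hθ1', ENNReal.mul_rpow_of_nonneg _ _ hθ1']
      _ ≤ 2 ^ m * B ^ (1 - θ) * (‖h'‖₊ : ℝ≥0∞) ^ ((1 - θ) * β) := by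
          rw [← ENNReal.rpow_mul, mul_comm β (1 - θ)]
          refine mul_le_mul_left (mul_le_mul_left ?_ _) _
          calc ((2:ℝ≥0∞) ^ m) ^ (1 - θ) ≤ ((2:ℝ≥0∞) ^ m) ^ (1:ℝ) :=
                ENNReal.rpow_le_rpow_of_exponent_le (one_le_pow_of_one_le' one_le_two m) (by linarith)
            _ = 2 ^ m := ENNReal.rpow_one _
  calc M = M ^ θ * M ^ (1 - θ) := hsplit
    _ ≤ (2 ^ n * A ^ θ * (‖h‖₊ : ℝ≥0∞) ^ (θ * γ))
        * (2 ^ m * B ^ (1 - θ) * (‖h'‖₊ : ℝ≥0∞) ^ ((1 - θ) * β)) := mul_le_mul' p1 p2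
    _ = ENNReal.ofReal ((2:ℝ) ^ (n + m)) * A ^ θ * B ^ (1 - θ)
        * ((‖h‖₊ : ℝ≥0∞) ^ (θ * γ) * (‖h'‖₊ : ℝ≥0∞) ^ ((1 - θ) * β)) := by
        rw [hC]; ring
end
end

section
/- Dyadic sums over the interaction index set (Lemma 6.8(ii)). Let α > 0 and c₁ ≥ 1. For t ≥ 0 and j ≥ 1 define Θ^t_j := {ℓ ∈ ℕ₀ : 2^ℓ ≤ 2⁴c₁(2^j + t·2^{(1+α)j}) and 2^j ≤ 2⁴c₁(2^ℓ + t·2^{(1+α)ℓ})}. Then for every β > 0 there is a constant C = C(c₁, β) > 0 such that for all j ≥ 1 and all t ≥ 0: Σ_{ℓ∈Θ^t_j} 2^{−βℓ} ≤ C·(2^{−j} + t·2^{(α−1)j})^β and Σ_{ℓ∈Θ^t_j} 2^{βℓ} ≤ C·(2^j + t·2^{(1+α)j})^β. -/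
/- Dyadic sums over the interaction index set (Lemma 6.8(ii)):
Θ^t_j := {ℓ ∈ ℕ₀ : 2^ℓ ≤ 2⁴c₁(2^j + t·2^{(1+α)j}) and 2^j ≤ 2⁴c₁(2^ℓ + t·2^{(1+α)ℓ})}.
For every β > 0 there is C = C(c₁,β) > 0 such that for all j ≥ 1, t ≥ 0:
Σ_{ℓ∈Θ^t_j} 2^{−βℓ} ≤ C(2^{−j} + t·2^{(α−1)j})^β and
Σ_{ℓ∈Θ^t_j} 2^{βℓ} ≤ C(2^j + t·2^{(1+α)j})^β. -/

noncomputable section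

/-- the interaction index set `Θ^t_j` -/
def ThetaSet (α c₁ t : ℝ) (j : ℕ) : Set ℕ :=
  {ℓ : ℕ | (2:ℝ) ^ ℓ ≤ 2 ^ 4 * c₁ * ((2:ℝ) ^ j + t * (2:ℝ) ^ ((1 + α) * (j : ℝ))) ∧
           (2:ℝ) ^ j ≤ 2 ^ 4 * c₁ * ((2:ℝ) ^ ℓ + t * (2:ℝ) ^ ((1 + α) * (ℓ : ℝ)))}

open Real

lemma geom_tail_bound {r : ℝ} (hr0 : 0 ≤ r) (hr1 : r < 1) (S : Set ℕ) (m : ℕ)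
    (hS : ∀ ℓ ∈ S, m ≤ ℓ) :
    ∑' ℓ : S, r ^ (ℓ : ℕ) ≤ r ^ m * (1 - r)⁻¹ := by
  have hg : Summable (fun k : ℕ => r ^ k) := summable_geometric_of_lt_one hr0 hr1
  have hsum : Summable (fun k : ℕ => r ^ (m + k)) := by
    simpa [pow_add] using hg.mul_left (r ^ m)
  have h1 : ∑' ℓ : S, r ^ (ℓ : ℕ) ≤ ∑' k : ℕ, r ^ (m + k) := by
    apply Summable.tsum_le_tsum_of_inj (fun ℓ : S => (ℓ : ℕ) - m)
    · intro a b hab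
      have ha := hS a a.2
      have hb := hS b b.2
      simp only at hab
      ext
      omega
    · intro c _; positivity
    · intro ℓ
      have := hS ℓ ℓ.2
      rw [show m + ((ℓ:ℕ) - m) = (ℓ:ℕ) by omega]
    · exact hg.subtype S
    · exact hsum
  have h2 : ∑' k : ℕ, r ^ (m + k) = r ^ m * (1 - r)⁻¹ := by
    simp only [pow_add]
    rw [tsum_mul_left, tsum_geometric_of_lt_one hr0 hr1]
  linarith [h1, h2.le]

lemma geom_head_bound {r : ℝ} (hr1 : 1 < r) (S : Set ℕ) (L : ℕ)
    (hS : ∀ ℓ ∈ S, ℓ ≤ L) :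
    ∑' ℓ : S, r ^ (ℓ : ℕ) ≤ r ^ L * (r * (r - 1)⁻¹) := by
  have h0 : (0:ℝ) < r := lt_trans one_pos hr1
  have heq : ∑' ℓ : S, r ^ (ℓ:ℕ)
      = ∑ ℓ ∈ Finset.range (L+1), S.indicator (fun ℓ => r ^ ℓ) ℓ := by
    rw [tsum_subtype]
    apply tsum_eq_sum
    intro b hb
    have hbL : L + 1 ≤ b := by simpa using hb
    apply Set.indicator_of_notMem
    intro hbS
    exact absurd (hS b hbS) (by omega)
  rw [heq]
  have hle : ∑ ℓ ∈ Finset.range (L+1), S.indicator (fun ℓ => r ^ ℓ) ℓ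
      ≤ ∑ ℓ ∈ Finset.range (L+1), r ^ ℓ := by
    apply Finset.sum_le_sum
    intro i _
    by_cases h : i ∈ S
    · simp [Set.indicator, h]
    · simp [Set.indicator, h]; positivity
  have hgeom : ∑ ℓ ∈ Finset.range (L+1), r ^ ℓ = (r ^ (L+1) - 1) / (r - 1) :=
    geom_sum_eq (ne_of_gt hr1) (L+1)
  have hr1' : (0:ℝ) < r - 1 := by linarith
  have hfin : (r ^ (L+1) - 1) / (r - 1) ≤ r ^ L * (r * (r - 1)⁻¹) := by
    rw [div_le_iff₀ hr1']
    have he : r ^ L * (r * (r-1)⁻¹) * (r-1) = r ^ (L+1) := by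
      field_simp
      ring
    rw [he]
    have : (0:ℝ) < r ^ (L+1) := pow_pos h0 _
    linarith
  linarith

lemma theta_lower {α c₁ t : ℝ} (hα : 0 < α) (hc₁ : 1 ≤ c₁) (ht : 0 ≤ t) {j ℓ : ℕ}
    (hmem : ℓ ∈ ThetaSet α c₁ t j) :
    (2:ℝ) ^ (-(ℓ:ℝ)) ≤ 32 * c₁ * ((2:ℝ)^(-(j:ℝ)) + t * (2:ℝ)^((α-1)*(j:ℝ))) := by
  obtain ⟨-, h2⟩ := hmem
  rw [← Real.rpow_natCast 2 j, ← Real.rpow_natCast 2 ℓ] at h2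
  have hA : (0:ℝ) < (2:ℝ)^(ℓ:ℝ) := rpow_pos_of_pos two_pos _
  have hB : (0:ℝ) < (2:ℝ)^(j:ℝ) := rpow_pos_of_pos two_pos _
  have hP : (0:ℝ) < (2:ℝ)^((α-1)*(j:ℝ)) := rpow_pos_of_pos two_pos _
  have hAi : (0:ℝ) < (2:ℝ)^(-(ℓ:ℝ)) := rpow_pos_of_pos two_pos _
  have hnn : 0 ≤ t * (2:ℝ)^((α-1)*(j:ℝ)) := mul_nonneg ht hP.le
  have hBi : (0:ℝ) < (2:ℝ)^(-(j:ℝ)) := rpow_pos_of_pos two_pos _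
  have hc : (1:ℝ) ≤ 32 * c₁ := by linarith
  rcases le_or_gt (j:ℕ) ℓ with hje | hje
  · have h1 : (2:ℝ)^(-(ℓ:ℝ)) ≤ (2:ℝ)^(-(j:ℝ)) := by
      apply rpow_le_rpow_of_exponent_le one_le_two
      simpa using (Nat.cast_le (α := ℝ)).mpr hje
    nlinarith [mul_nonneg (by linarith : (0:ℝ) ≤ 32*c₁ - 1) hBi.le,
      mul_nonneg (by linarith : (0:ℝ) ≤ 32*c₁) hnn]
  · have hejr : (ℓ:ℝ) ≤ (j:ℝ) := by exact_mod_cast hje.le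
    rcases le_or_gt ((2:ℝ)^(j:ℝ)) (32*c₁*(2:ℝ)^(ℓ:ℝ)) with hcase | hcase
    · have hq : (2:ℝ)^(j:ℝ)/(32*c₁) ≤ (2:ℝ)^(ℓ:ℝ) := by
        rw [div_le_iff₀ (by linarith : (0:ℝ) < 32*c₁)]
        nlinarith
      have h1 : (2:ℝ)^(-(ℓ:ℝ)) ≤ 32*c₁*(2:ℝ)^(-(j:ℝ)) := by
        rw [Real.rpow_neg (by norm_num), Real.rpow_neg (by norm_num)]
        have hinv := inv_anti₀ (by positivity) hq
        calc ((2:ℝ)^(ℓ:ℝ))⁻¹ ≤ ((2:ℝ)^(j:ℝ)/(32*c₁))⁻¹ := hinv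
          _ = 32*c₁*((2:ℝ)^(j:ℝ))⁻¹ := by
              rw [inv_div, div_eq_mul_inv]
      nlinarith [mul_nonneg (by linarith : (0:ℝ) ≤ 32*c₁) hnn]
    · have hC : (0:ℝ) < (2:ℝ)^((1+α)*(ℓ:ℝ)) := rpow_pos_of_pos two_pos _
      have h3 : (2:ℝ)^(j:ℝ) ≤ 32*c₁*(t*(2:ℝ)^((1+α)*(ℓ:ℝ))) := by nlinarith
      have key : (2:ℝ)^(-(ℓ:ℝ)) * (2:ℝ)^((1+α)*(ℓ:ℝ))
          ≤ (2:ℝ)^((α-1)*(j:ℝ)) * (2:ℝ)^(j:ℝ) := by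
        rw [← Real.rpow_add two_pos, ← Real.rpow_add two_pos]
        apply rpow_le_rpow_of_exponent_le one_le_two
        nlinarith
      have hfin : (2:ℝ)^(-(ℓ:ℝ)) ≤ 32*c₁*(t*(2:ℝ)^((α-1)*(j:ℝ))) := by
        nlinarith [mul_le_mul_of_nonneg_left h3 hP.le, key, hC, hAi]
      nlinarith [mul_nonneg (by linarith : (0:ℝ) ≤ 32*c₁) hBi.le]

theorem dyadic_sums_interaction_set
    (α : ℝ) (hα : 0 < α) (c₁ : ℝ) (hc₁ : 1 ≤ c₁) (β : ℝ) (hβ : 0 < β) :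
    ∃ C > (0:ℝ), ∀ (j : ℕ), 1 ≤ j → ∀ t : ℝ, 0 ≤ t →
      (∑' ℓ : ThetaSet α c₁ t j, (2:ℝ) ^ (-(β * ((ℓ : ℕ) : ℝ))))
          ≤ C * ((2:ℝ) ^ (-(j:ℝ)) + t * (2:ℝ) ^ ((α - 1) * (j:ℝ))) ^ β ∧
      (∑' ℓ : ThetaSet α c₁ t j, (2:ℝ) ^ (β * ((ℓ : ℕ) : ℝ)))
          ≤ C * ((2:ℝ) ^ (j:ℕ) + t * (2:ℝ) ^ ((1 + α) * (j:ℝ))) ^ β := by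
  have h2lt : (1:ℝ) < 2 := one_lt_two
  have hr0 : (0:ℝ) < (2:ℝ)^(-β) := rpow_pos_of_pos two_pos _
  have hr1 : (2:ℝ)^(-β) < 1 := rpow_lt_one_of_one_lt_of_neg h2lt (neg_lt_zero.mpr hβ)
  have hs1 : (1:ℝ) < (2:ℝ)^β := (one_lt_rpow_iff_of_pos two_pos).mpr (Or.inl ⟨h2lt, hβ⟩)
  have hs0 : (0:ℝ) < (2:ℝ)^β := by linarith
  have hconst : (2:ℝ)^β * ((2:ℝ)^β - 1)⁻¹ = (1 - (2:ℝ)^(-β))⁻¹ := by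
    rw [Real.rpow_neg (by norm_num)]
    rw [show (1 - ((2:ℝ)^β)⁻¹) = ((2:ℝ)^β - 1)/(2:ℝ)^β by field_simp]
    rw [inv_div, div_eq_mul_inv]
  have hCpos : (0:ℝ) < (1 - (2:ℝ)^(-β))⁻¹ * (32*c₁)^β :=
    mul_pos (inv_pos.mpr (by linarith)) (rpow_pos_of_pos (by linarith) β)
  refine ⟨(1 - (2:ℝ)^(-β))⁻¹ * (32*c₁)^β, hCpos, ?_⟩
  intro j hj t ht
  have hP : (0:ℝ) < (2:ℝ)^((α-1)*(j:ℝ)) := rpow_pos_of_pos two_pos _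
  have hBi : (0:ℝ) < (2:ℝ)^(-(j:ℝ)) := rpow_pos_of_pos two_pos _
  have hY : (0:ℝ) < (2:ℝ)^(-(j:ℝ)) + t * (2:ℝ)^((α-1)*(j:ℝ)) := by positivity
  set Y : ℝ := (2:ℝ)^(-(j:ℝ)) + t * (2:ℝ)^((α-1)*(j:ℝ)) with hYdef
  have hD : (0:ℝ) < 32*c₁*Y := by positivity
  constructor
  · -- first sum
    set m : ℕ := ⌈Real.logb 2 (32*c₁*Y)⁻¹⌉₊ with hmdef
    have hmem : ∀ ℓ ∈ ThetaSet α c₁ t j, m ≤ ℓ := by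
      intro ℓ hℓ
      have hkey := theta_lower hα hc₁ ht hℓ
      rw [hmdef, Nat.ceil_le]
      have h5 : (32*c₁*Y)⁻¹ ≤ (2:ℝ)^(ℓ:ℝ) := by
        rw [Real.rpow_neg (by norm_num)] at hkey
        have := inv_anti₀ (by positivity) hkey
        simpa [hYdef] using this
      calc Real.logb 2 (32*c₁*Y)⁻¹ ≤ Real.logb 2 ((2:ℝ)^(ℓ:ℝ)) :=
            (Real.logb_le_logb h2lt (by positivity) (by positivity)).mpr h5
        _ = (ℓ:ℝ) := Real.logb_rpow two_pos (by norm_num)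
    have hre : ∀ ℓ : ℕ, (2:ℝ)^(-(β * (ℓ:ℝ))) = ((2:ℝ)^(-β)) ^ ℓ := by
      intro ℓ
      rw [← Real.rpow_natCast ((2:ℝ)^(-β)) ℓ, ← Real.rpow_mul (by norm_num), neg_mul]
    have hsum1 : ∑' ℓ : ThetaSet α c₁ t j, (2:ℝ) ^ (-(β * ((ℓ:ℕ):ℝ)))
        = ∑' ℓ : ThetaSet α c₁ t j, ((2:ℝ)^(-β)) ^ ((ℓ:ℕ)) := tsum_congr fun ℓ => hre _
    rw [hsum1]
    have hb := geom_tail_bound hr0.le hr1 (ThetaSet α c₁ t j) m hmem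
    have hm : Real.logb 2 (32*c₁*Y)⁻¹ ≤ (m:ℝ) := Nat.le_ceil _
    have h6 : (2:ℝ)^(-(m:ℝ)) ≤ 32*c₁*Y := by
      have h7 : (32*c₁*Y)⁻¹ ≤ (2:ℝ)^(m:ℝ) := by
        calc (32*c₁*Y)⁻¹ = 2^(Real.logb 2 (32*c₁*Y)⁻¹) :=
              (rpow_logb two_pos (by norm_num) (inv_pos.mpr hD)).symm
          _ ≤ (2:ℝ)^(m:ℝ) := rpow_le_rpow_of_exponent_le one_le_two hm
      rw [Real.rpow_neg (by norm_num)]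
      have := inv_anti₀ (inv_pos.mpr hD) h7
      simpa using this
    have h7 : ((2:ℝ)^(-β)) ^ m ≤ (32*c₁*Y) ^ β := by
      have he : ((2:ℝ)^(-β)) ^ m = ((2:ℝ)^(-(m:ℝ)))^β := by
        rw [← Real.rpow_natCast ((2:ℝ)^(-β)) m, ← Real.rpow_mul (by norm_num),
          ← Real.rpow_mul (by norm_num)]
        ring_nf
      rw [he]
      exact rpow_le_rpow (by positivity) h6 hβ.le
    have h8 : (32*c₁*Y) ^ β = (32*c₁)^β * Y^β := mul_rpow (by linarith) hY.le
    calc ∑' ℓ : ThetaSet α c₁ t j, ((2:ℝ)^(-β)) ^ ((ℓ:ℕ))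
        ≤ ((2:ℝ)^(-β)) ^ m * (1 - (2:ℝ)^(-β))⁻¹ := hb
      _ ≤ (32*c₁*Y) ^ β * (1 - (2:ℝ)^(-β))⁻¹ := by
          apply mul_le_mul_of_nonneg_right h7
          exact inv_nonneg.mpr (by linarith)
      _ = (1 - (2:ℝ)^(-β))⁻¹ * (32*c₁)^β * Y^β := by rw [h8]; ring
  · -- second sum
    have hX2 : (1:ℝ) ≤ (2:ℝ)^(j:ℕ) := one_le_pow₀ (by norm_num)
    have hC1 : (0:ℝ) < (2:ℝ)^((1+α)*(j:ℝ)) := rpow_pos_of_pos two_pos _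
    have hXpos : (0:ℝ) < (2:ℝ)^(j:ℕ) + t * (2:ℝ)^((1+α)*(j:ℝ)) := by positivity
    set X : ℝ := (2:ℝ)^(j:ℕ) + t * (2:ℝ)^((1+α)*(j:ℝ)) with hXdef
    have hX1 : (1:ℝ) ≤ X := by
      have : 0 ≤ t * (2:ℝ)^((1+α)*(j:ℝ)) := mul_nonneg ht hC1.le
      rw [hXdef]; linarith
    have hM1 : (1:ℝ) ≤ 16*c₁*X := by nlinarith
    have hM0 : (0:ℝ) < 16*c₁*X := by linarith
    set L : ℕ := ⌊Real.logb 2 (16*c₁*X)⌋₊ with hLdef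
    have hmem : ∀ ℓ ∈ ThetaSet α c₁ t j, ℓ ≤ L := by
      intro ℓ hℓ
      obtain ⟨h1, -⟩ := hℓ
      rw [← Real.rpow_natCast 2 ℓ] at h1
      have h1' : (2:ℝ)^(ℓ:ℝ) ≤ 16*c₁*X := by
        rw [hXdef]; nlinarith
      rw [hLdef]
      apply Nat.le_floor
      calc (ℓ:ℝ) = Real.logb 2 ((2:ℝ)^(ℓ:ℝ)) := (Real.logb_rpow two_pos (by norm_num)).symm
        _ ≤ Real.logb 2 (16*c₁*X) :=
            (Real.logb_le_logb h2lt (by positivity) hM0).mpr h1'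
    have hre : ∀ ℓ : ℕ, (2:ℝ)^(β * (ℓ:ℝ)) = ((2:ℝ)^β) ^ ℓ := by
      intro ℓ
      rw [← Real.rpow_natCast ((2:ℝ)^β) ℓ, ← Real.rpow_mul (by norm_num)]
    have hsum2 : ∑' ℓ : ThetaSet α c₁ t j, (2:ℝ) ^ (β * ((ℓ:ℕ):ℝ))
        = ∑' ℓ : ThetaSet α c₁ t j, ((2:ℝ)^β) ^ ((ℓ:ℕ)) := tsum_congr fun ℓ => hre _
    rw [hsum2]
    have hb := geom_head_bound hs1 (ThetaSet α c₁ t j) L hmem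
    have hL : (L:ℝ) ≤ Real.logb 2 (16*c₁*X) :=
      Nat.floor_le (Real.logb_nonneg h2lt hM1)
    have h6 : (2:ℝ)^(L:ℝ) ≤ 16*c₁*X := by
      calc (2:ℝ)^(L:ℝ) ≤ 2^(Real.logb 2 (16*c₁*X)) :=
            rpow_le_rpow_of_exponent_le one_le_two hL
        _ = 16*c₁*X := rpow_logb two_pos (by norm_num) hM0
    have h7 : ((2:ℝ)^β) ^ L ≤ (16*c₁*X) ^ β := by
      have he : ((2:ℝ)^β) ^ L = ((2:ℝ)^(L:ℝ))^β := by
        rw [← Real.rpow_natCast ((2:ℝ)^β) L, ← Real.rpow_mul (by norm_num),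
          ← Real.rpow_mul (by norm_num)]
        ring_nf
      rw [he]
      exact rpow_le_rpow (by positivity) h6 hβ.le
    have h8 : (16*c₁*X) ^ β = (16*c₁)^β * X^β := mul_rpow (by linarith) (by linarith)
    have h9 : (16*c₁)^β ≤ (32*c₁)^β := rpow_le_rpow (by linarith) (by linarith) hβ.le
    have hXβ : (0:ℝ) ≤ X^β := (rpow_pos_of_pos (by linarith) β).le
    calc ∑' ℓ : ThetaSet α c₁ t j, ((2:ℝ)^β) ^ ((ℓ:ℕ))
        ≤ ((2:ℝ)^β) ^ L * ((2:ℝ)^β * ((2:ℝ)^β - 1)⁻¹) := hb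
      _ = ((2:ℝ)^β) ^ L * (1 - (2:ℝ)^(-β))⁻¹ := by rw [hconst]
      _ ≤ (16*c₁*X) ^ β * (1 - (2:ℝ)^(-β))⁻¹ := by
          apply mul_le_mul_of_nonneg_right h7
          exact inv_nonneg.mpr (by linarith)
      _ = (1 - (2:ℝ)^(-β))⁻¹ * ((16*c₁)^β * X^β) := by rw [h8]; ring
      _ ≤ (1 - (2:ℝ)^(-β))⁻¹ * ((32*c₁)^β * X^β) := by
          apply mul_le_mul_of_nonneg_left _ (inv_nonneg.mpr (by linarith))
          exact mul_le_mul_of_nonneg_right h9 hXβ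
      _ = (1 - (2:ℝ)^(-β))⁻¹ * (32*c₁)^β * X^β := by ring
end
end

section
/- Absolute continuity from everywhere-existing integrable right derivatives (Lemma 7.4). Let a < b be reals and f : [a,b] → ℝ be continuous. Assume that for every t ∈ [a,b) the right derivative g(t) := lim_{ε↓0} (f(t+ε) − f(t))/ε exists, and that g is Lebesgue integrable on [a,b]. Then f is absolutely continuous on [a,b]; in particular f(x) = f(a) + ∫_a^x g(t) dt for every x ∈ [a,b]. -/
/- Absolute continuity from everywhere-existing integrable right derivatives (Lemma 7.4):
if f : [a,b] → ℝ is continuous, the right derivative g(t) exists at every t ∈ [a,b),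
and g is Lebesgue integrable on [a,b], then f is absolutely continuous; in particular
f(x) = f(a) + ∫_a^x g(t) dt for every x ∈ [a,b]. -/

open MeasureTheory Filter

theorem abs_continuous_of_right_deriv
    (a b : ℝ) (hab : a < b) (f g : ℝ → ℝ)
    (hf : ContinuousOn f (Set.Icc a b))
    (hg : ∀ t ∈ Set.Ico a b,
      Tendsto (fun ε : ℝ => (f (t + ε) - f t) / ε) (nhdsWithin 0 (Set.Ioi 0)) (nhds (g t)))
    (hint : IntegrableOn g (Set.Icc a b)) :
    ∀ x ∈ Set.Icc a b, f x = f a + ∫ t in a..x, g t := by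
  intro x hx
  have hderiv : ∀ t ∈ Set.Ico a b, HasDerivWithinAt f (g t) (Set.Ioi t) t := by
    intro t ht
    rw [hasDerivWithinAt_iff_tendsto_slope]
    have hmap : Tendsto (fun y : ℝ => y - t) (nhdsWithin t (Set.Ioi t))
        (nhdsWithin 0 (Set.Ioi 0)) := by
      apply tendsto_nhdsWithin_of_tendsto_nhds_of_eventually_within
      · have : Tendsto (fun y : ℝ => y - t) (nhds t) (nhds (t - t)) :=
          tendsto_id.sub tendsto_const_nhds
        simpa using this.mono_left nhdsWithin_le_nhds
      · filter_upwards [self_mem_nhdsWithin] with y hy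
        simpa using sub_pos.2 (Set.mem_Ioi.1 hy)
    have := ((hg t ht).comp hmap).mono_left (nhdsWithin_mono t (Set.diff_subset : Set.Ioi t \ {t} ⊆ Set.Ioi t))
    apply this.congr'
    filter_upwards [self_mem_nhdsWithin] with y hy
    simp [slope, Function.comp, vsub_eq_sub]
    ring_nf
  have hax : a ≤ x := hx.1
  have hxb : x ≤ b := hx.2
  have key : ∫ t in a..x, g t = f x - f a := by
    apply intervalIntegral.integral_eq_sub_of_hasDeriv_right_of_le hax
    · exact hf.mono (Set.Icc_subset_Icc le_rfl hxb)
    · intro t ht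
      exact hderiv t ⟨ht.1.le, lt_of_lt_of_le ht.2 hxb⟩
    · exact (intervalIntegrable_iff_integrableOn_Icc_of_le hax).2 (hint.mono_set (Set.Icc_subset_Icc le_rfl hxb))
  rw [key]; ring
end

section
/- Deterministic core of the random transport equation (from the proof of Theorem 7.5). Let d ≥ 1, let b : ℝ_+×ℝ^d → ℝ^d be continuous, and let ℓ : ℝ_+ → ℝ^d be right-continuous and locally bounded. Suppose {X_{s,t} : 0 ≤ s ≤ t} is a family of maps X_{s,t} : ℝ^d → ℝ^d such that: (a) X_{s,t}(x) = x + ∫_s^t (b(r, X_{s,r}(x)) + ℓ(r)) dr for all 0 ≤ s ≤ t and x; (b) X_{s,t} = X_{r,t} ∘ X_{s,r} for all s ≤ r ≤ t; (c) each X_{s,t} is a C¹-diffeomorphism of ℝ^d; (d) for every t ≥ 0 and R > 0, sup_{|x|≤R} |∇(X_{t,t+ε}^{-1})(x) − I| → 0 as ε ↓ 0, and sup_{t≤T, |x|≤R}(|X_{0,t}^{-1}(x)| + |∇(X_{0,t}^{-1})(x)|) < ∞ for all T, R > 0. Then for every φ ∈ C¹_b(ℝ^d), the function u(t,x) := φ(X_{0,t}^{-1}(x))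 satisfies: u(0,x) = φ(x); x ↦ u(t,x) is continuously differentiable for every t; for every (t,x) ∈ ℝ_+×ℝ^d the right derivative ∂_t^+ u(t,x) := lim_{ε↓0}(u(t+ε,x) − u(t,x))/ε exists and equals −(b(t,x) + ℓ(t))·∇_x u(t,x); and for each x, t ↦ u(t,x) is absolutely continuous on every compact interval, so that ∂_t u(t,x) + (b(t,x) + ℓ(t))·∇_x u(t,x) = 0 for Lebesgue-almost every t. -/
/- Deterministic core of the random transport equation (from the proof of Theorem 7.5):
given a flow X_{s,t} of C¹-diffeomorphisms solving Ẋ = b(t,X) + ℓ(t) with the stated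
regularity of the inverse maps, u(t,x) := φ(X_{0,t}⁻¹(x)) satisfies u(0)=φ, is C¹ in x,
has right time-derivative −(b(t,x)+ℓ(t))·∇u(t,x), and is absolutely continuous in t with
∂_t u + (b+ℓ)·∇u = 0 a.e., expressed by the integrated identity. -/

open MeasureTheory Filter

noncomputable section

open Set in
lemma prim_bound {d : ℕ} (f : ℝ → Ed d) (s t₁ C : ℝ)
    (hst : s ≤ t₁) (hC : 0 ≤ C) (hCh : C * (t₁ - s) ≤ 1/3)
    (hint : IntervalIntegrable f MeasureTheory.volume s t₁)
    (hfb : ∀ r ∈ Set.Ioc s t₁, ‖(∫ ρ in s..r, f ρ)‖ ≤ 1 → ‖f r‖ ≤ C) :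
    ∀ r ∈ Set.Icc s t₁, ‖(∫ ρ in s..r, f ρ)‖ ≤ C * (r - s) := by
  set G : ℝ → Ed d := fun r => ∫ ρ in s..r, f ρ with hGdef
  have hGs : G s = 0 := intervalIntegral.integral_same
  have hGcont : ContinuousOn G (Icc s t₁) := by
    have h0 : IntegrableOn f (uIcc s t₁) volume := by
      rw [uIcc_of_le hst]
      exact (integrableOn_Icc_iff_integrableOn_Ioc enorm_ne_top).2
        ((intervalIntegrable_iff_integrableOn_Ioc_of_le hst).1 hint)
    have := intervalIntegral.continuousOn_primitive_interval h0
    rwa [uIcc_of_le hst] at this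
  have key : ∀ r ∈ Icc s t₁, (∀ ρ ∈ Ico s r, ‖G ρ‖ ≤ 1) → ‖G r‖ ≤ C * (r - s) := by
    intro r hr hρ
    have h1 : ‖∫ ρ in s..r, f ρ‖ ≤ C * |r - s| := by
      apply intervalIntegral.norm_integral_le_of_norm_le_const_ae
      have hnull : (MeasureTheory.volume : Measure ℝ) {r} = 0 := measure_singleton r
      filter_upwards [measure_eq_zero_iff_ae_notMem.mp hnull] with ρ hρr hρin
      rw [uIoc_of_le hr.1] at hρin
      have hmem : ρ ∈ Ico s r := ⟨le_of_lt hρin.1, lt_of_le_of_ne hρin.2 hρr⟩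
      exact hfb ρ ⟨hρin.1, le_trans hρin.2 hr.2⟩ (hρ ρ hmem)
    rwa [abs_of_nonneg (by linarith [hr.1])] at h1
  set E : Set ℝ := {r | r ∈ Icc s t₁ ∧ ∀ ρ ∈ Icc s r, ‖G ρ‖ ≤ 1/2} with hEdef
  have hsE : s ∈ E := by
    refine ⟨⟨le_refl s, hst⟩, ?_⟩
    intro ρ hρ
    have : ρ = s := le_antisymm hρ.2 hρ.1
    rw [this, hGs]; norm_num
  have hEbdd : BddAbove E := ⟨t₁, fun r hr => hr.1.2⟩
  have hEne : E.Nonempty := ⟨s, hsE⟩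
  set τ := sSup E with hτdef
  have hsτ : s ≤ τ := le_csSup hEbdd hsE
  have hτt₁ : τ ≤ t₁ := csSup_le hEne (fun r hr => hr.1.2)
  have hIco : ∀ ρ ∈ Ico s τ, ‖G ρ‖ ≤ 1/2 := by
    intro ρ hρ
    obtain ⟨r, hrE, hρr⟩ := exists_lt_of_lt_csSup hEne hρ.2
    exact hrE.2 ρ ⟨hρ.1, le_of_lt hρr⟩
  have hGτ : ‖G τ‖ ≤ C * (τ - s) :=
    key τ ⟨hsτ, hτt₁⟩ (fun ρ hρ => le_trans (hIco ρ hρ) (by norm_num))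
  have hCτ : C * (τ - s) ≤ 1/3 := le_trans (by nlinarith) hCh
  have hτE : τ ∈ E := by
    refine ⟨⟨hsτ, hτt₁⟩, ?_⟩
    intro ρ hρ
    rcases lt_or_eq_of_le hρ.2 with h | h
    · exact hIco ρ ⟨hρ.1, h⟩
    · rw [h]; linarith
  have hτeq : τ = t₁ := by
    by_contra hne
    have hτlt : τ < t₁ := lt_of_le_of_ne hτt₁ hne
    have hcw : ContinuousWithinAt G (Icc s t₁) τ := hGcont τ ⟨hsτ, hτt₁⟩
    have hsmall : ‖G τ‖ < 1/2 := lt_of_le_of_lt hGτ (by linarith)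
    have hev : {ρ | ‖G ρ‖ < 1/2} ∈ nhdsWithin τ (Icc s t₁) := by
      have : Metric.ball (G τ) (1/2 - ‖G τ‖) ∈ nhds (G τ) :=
        Metric.ball_mem_nhds _ (by linarith)
      filter_upwards [hcw this] with ρ hρ
      have := norm_sub_norm_le (G ρ) (G τ)
      have hd : dist (G ρ) (G τ) < 1/2 - ‖G τ‖ := hρ
      rw [dist_eq_norm] at hd
      linarith
    rw [Metric.mem_nhdsWithin_iff] at hev
    obtain ⟨δ, hδ, hball⟩ := hev
    set r' := min t₁ (τ + δ/2) with hr'def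
    have hτr' : τ < r' := lt_min hτlt (by linarith)
    have hr'mem : r' ∈ Icc s t₁ := ⟨le_trans hsτ (le_of_lt hτr'), min_le_left _ _⟩
    have hr'E : r' ∈ E := by
      refine ⟨hr'mem, ?_⟩
      intro ρ hρ
      rcases le_or_gt ρ τ with h | h
      · exact hτE.2 ρ ⟨hρ.1, h⟩
      · have h1 : ρ ∈ Metric.ball τ δ := by
          have : ρ ≤ τ + δ/2 := le_trans hρ.2 (min_le_right _ _)
          rw [Metric.mem_ball, Real.dist_eq, abs_of_pos (by linarith)]
          linarith
        have h2 : ρ ∈ Icc s t₁ := ⟨hρ.1, le_trans hρ.2 hr'mem.2⟩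
        exact le_of_lt (hball ⟨h1, h2⟩)
    exact absurd (le_csSup hEbdd hr'E) (not_le.2 hτr')
  intro r hr
  refine key r hr ?_
  intro ρ hρ
  refine le_trans (hτE.2 ρ ⟨hρ.1, ?_⟩) (by norm_num)
  rw [hτeq]; exact le_trans (le_of_lt hρ.2) hr.2

open Set in
lemma apriori {d : ℕ} (b : ℝ → Ed d → Ed d) (ℓ : ℝ → Ed d) (X : ℝ → ℝ → Ed d → Ed d)
    (hb : Continuous fun p : ℝ × Ed d => b p.1 p.2) (hℓm : Measurable ℓ)
    (hXeq : ∀ s t : ℝ, 0 ≤ s → s ≤ t → ∀ x : Ed d,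
      X s t x = x + ∫ r in s..t, (b r (X s r x) + ℓ r))
    (s : ℝ) (hs : 0 ≤ s) (z : Ed d) (C h : ℝ) (hC : 1 ≤ C) (hh : 0 < h)
    (hCh : C * h ≤ 1/3)
    (hCb : ∀ r ∈ Set.Icc s (s+h), ∀ w : Ed d, ‖w - z‖ ≤ 1 → ‖b r w + ℓ r‖ ≤ C) :
    IntervalIntegrable (fun r => b r (X s r z) + ℓ r) MeasureTheory.volume s (s+h) ∧
    ∀ r ∈ Set.Icc s (s+h), ‖X s r z - z‖ ≤ C * (r - s) := by
  set f : ℝ → Ed d := fun r => b r (X s r z) + ℓ r with hf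
  have hXf : ∀ r, s ≤ r → X s r z - z = ∫ ρ in s..r, f ρ := by
    intro r hr
    rw [hXeq s r hs hr]
    abel
  have hfb' : ∀ t₁ ∈ Icc s (s+h), IntervalIntegrable f volume s t₁ →
      ∀ r ∈ Icc s t₁, ‖X s r z - z‖ ≤ C * (r - s) := by
    intro t₁ ht₁ hint
    have hkey := prim_bound f s t₁ C ht₁.1 (by linarith)
      (by nlinarith [ht₁.2, ht₁.1]) hint ?_
    · intro r hr
      rw [hXf r hr.1]
      exact hkey r hr
    · intro r hr hGr
      refine hCb r ⟨le_of_lt hr.1, le_trans hr.2 ht₁.2⟩ (X s r z) ?_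
      rw [hXf r (le_of_lt hr.1)]
      exact hGr
  set D : Set ℝ := {r | r ∈ Icc s (s+h) ∧ IntervalIntegrable f volume s r} with hD
  have hsD : s ∈ D := ⟨⟨le_refl s, by linarith⟩, IntervalIntegrable.refl⟩
  have hDmono : ∀ r ∈ D, ∀ r', s ≤ r' → r' ≤ r → IntervalIntegrable f volume s r' := by
    intro r hr r' h1 h2
    refine hr.2.mono_set ?_
    rw [uIcc_of_le h1, uIcc_of_le (le_trans h1 h2)]
    exact Icc_subset_Icc le_rfl h2
  have hDbdd : BddAbove D := ⟨s+h, fun r hr => hr.1.2⟩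
  have hDne : D.Nonempty := ⟨s, hsD⟩
  set σ := sSup D with hσdef
  have hsσ : s ≤ σ := le_csSup hDbdd hsD
  have hσh : σ ≤ s + h := csSup_le hDne fun r hr => hr.1.2
  have hXbd : ∀ r ∈ Icc s (s+h), ‖X s r z - z‖ ≤ 1/3 := by
    intro r hr
    by_cases hrint : IntervalIntegrable f volume s r
    · calc ‖X s r z - z‖ ≤ C * (r - s) := hfb' r hr hrint r ⟨hr.1, le_refl r⟩
        _ ≤ C * h := by nlinarith [hr.2, hr.1]
        _ ≤ 1/3 := hCh
    · rw [hXf r hr.1, intervalIntegral.integral_undef hrint]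
      norm_num
  have hfC : ∀ r ∈ Icc s (s+h), ‖f r‖ ≤ C := fun r hr =>
    hCb r hr (X s r z) (le_trans (hXbd r hr) (by norm_num))
  have hmeas : AEStronglyMeasurable f (volume.restrict (Ioc s (s+h))) := by
    have h1 : AEStronglyMeasurable f (volume.restrict (Ioo s σ)) := by
      rcases eq_or_lt_of_le hsσ with heq | hlt
      · rw [← heq, Set.Ioo_self, Measure.restrict_empty]
        exact aestronglyMeasurable_zero_measure f
      · have hIoo : Ioo s σ = ⋃ n : ℕ, Ioc s (σ - (σ - s)/(n+1)) := by
          ext ρ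
          simp only [mem_Ioo, mem_iUnion, mem_Ioc]
          constructor
          · rintro ⟨h1, h2⟩
            obtain ⟨n, hn⟩ := exists_nat_ge ((σ - s)/(σ - ρ))
            refine ⟨n, h1, ?_⟩
            have hσρ : 0 < σ - ρ := by linarith
            rw [div_le_iff₀ hσρ] at hn
            have hn1 : σ - s ≤ (σ - ρ) * (n+1) := by nlinarith
            have : (σ - s)/(n+1) ≤ σ - ρ := by
              rw [div_le_iff₀ (by positivity)]
              linarith
            linarith
          · rintro ⟨n, h1, h2⟩
            have hpos : 0 < (σ - s)/(n+1) := div_pos (by linarith) (by positivity)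
            exact ⟨h1, by linarith⟩
        rw [hIoo, aestronglyMeasurable_iUnion_iff]
        intro n
        have hpos : 0 < (σ - s)/((n:ℝ)+1) := div_pos (by linarith [sub_pos.2 hlt]) (by positivity)
        have hle : (σ - s)/((n:ℝ)+1) ≤ σ - s := by
          rw [div_le_iff₀ (by positivity)]
          nlinarith [sub_pos.2 hlt]
        have htns : s ≤ σ - (σ - s)/((n:ℝ)+1) := by linarith
        have htn : σ - (σ - s)/((n:ℝ)+1) < σ := by linarith
        obtain ⟨r, hrD, hlt'⟩ := exists_lt_of_lt_csSup hDne htn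
        have hint : IntervalIntegrable f volume s (σ - (σ - s)/((n:ℝ)+1)) :=
          hDmono r hrD _ htns (le_of_lt hlt')
        exact ((intervalIntegrable_iff_integrableOn_Ioc_of_le htns).1 hint).aestronglyMeasurable
    have h2 : AEStronglyMeasurable f (volume.restrict ({σ} : Set ℝ)) := by
      rw [Measure.restrict_eq_zero.2 (measure_singleton σ)]
      exact aestronglyMeasurable_zero_measure f
    have h3 : AEStronglyMeasurable f (volume.restrict (Ioc σ (s+h))) := by
      have heqf : ∀ ρ ∈ Ioc σ (s+h), f ρ = b ρ z + ℓ ρ := by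
        intro ρ hρ
        have hρs : s ≤ ρ := le_trans hsσ (le_of_lt hρ.1)
        have hnot : ¬ IntervalIntegrable f volume s ρ := by
          intro hcon
          have hmem : ρ ∈ D := ⟨⟨hρs, hρ.2⟩, hcon⟩
          exact absurd (le_csSup hDbdd hmem) (not_le.2 hρ.1)
        have hXρ : X s ρ z = z := by
          have h0 := hXf ρ hρs
          rw [intervalIntegral.integral_undef hnot] at h0
          exact sub_eq_zero.1 h0
        simp only [hf, hXρ]
      have hbm : AEStronglyMeasurable (fun ρ => b ρ z + ℓ ρ)
          (volume.restrict (Ioc σ (s+h))) := by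
        have : Measurable (fun ρ => b ρ z + ℓ ρ) :=
          ((hb.comp (continuous_id.prodMk continuous_const)).measurable).add hℓm
        exact this.aestronglyMeasurable
      refine hbm.congr ?_
      filter_upwards [ae_restrict_mem measurableSet_Ioc] with ρ hρ
      exact (heqf ρ hρ).symm
    have hsub : Ioc s (s+h) ⊆ (Ioo s σ ∪ ({σ} ∪ Ioc σ (s+h))) := by
      intro ρ hρ
      rcases lt_trichotomy ρ σ with h1|h1|h1
      · exact Or.inl ⟨hρ.1, h1⟩
      · exact Or.inr (Or.inl h1)
      · exact Or.inr (Or.inr ⟨h1, hρ.2⟩)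
    have hun : AEStronglyMeasurable f
        (volume.restrict (Ioo s σ ∪ ({σ} ∪ Ioc σ (s+h)))) := by
      rw [aestronglyMeasurable_union_iff]
      exact ⟨h1, by rw [aestronglyMeasurable_union_iff]; exact ⟨h2, h3⟩⟩
    exact hun.mono_measure (Measure.restrict_mono hsub le_rfl)
  have hIoc : IntegrableOn f (Ioc s (s+h)) volume := by
    refine Integrable.mono' (g := fun _ => C) ?_ hmeas ?_
    · exact integrableOn_const measure_Ioc_lt_top.ne
    · filter_upwards [ae_restrict_mem measurableSet_Ioc] with ρ hρ
      exact hfC ρ ⟨le_of_lt hρ.1, hρ.2⟩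
  have hint : IntervalIntegrable f volume s (s+h) :=
    (intervalIntegrable_iff_integrableOn_Ioc_of_le (by linarith)).2 hIoc
  exact ⟨hint, hfb' (s+h) ⟨by linarith, le_refl _⟩ hint⟩


set_option maxHeartbeats 1000000 in
open Set in
lemma deriv_core {d : ℕ} (b : ℝ → Ed d → Ed d) (ℓ : ℝ → Ed d) (X Y : ℝ → ℝ → Ed d → Ed d)
    (hb : Continuous fun p : ℝ × Ed d => b p.1 p.2)
    (hℓr : ∀ t : ℝ, 0 ≤ t → Tendsto ℓ (nhdsWithin t (Set.Ici t)) (nhds (ℓ t)))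
    (hℓm : Measurable ℓ)
    (hℓb : ∀ T : ℝ, 0 < T → ∃ M : ℝ, ∀ t ∈ Set.Icc (0:ℝ) T, ‖ℓ t‖ ≤ M)
    (hXeq : ∀ s t : ℝ, 0 ≤ s → s ≤ t → ∀ x : Ed d,
      X s t x = x + ∫ r in s..t, (b r (X s r x) + ℓ r))
    (hYC1 : ∀ s t : ℝ, 0 ≤ s → s ≤ t → ContDiff ℝ 1 (Y s t))
    (hXY : ∀ s t : ℝ, 0 ≤ s → s ≤ t → ∀ x : Ed d, X s t (Y s t x) = x)
    (hYX : ∀ s t : ℝ, 0 ≤ s → s ≤ t → ∀ x : Ed d, Y s t (X s t x) = x)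
    (hYjac : ∀ t : ℝ, 0 ≤ t → ∀ R > (0:ℝ), ∀ δ > (0:ℝ), ∃ ε₀ > (0:ℝ),
      ∀ ε : ℝ, 0 < ε → ε < ε₀ → ∀ x : Ed d, ‖x‖ ≤ R →
        ‖fderiv ℝ (Y t (t + ε)) x - ContinuousLinearMap.id ℝ (Ed d)‖ ≤ δ)
    (t : ℝ) (ht : 0 ≤ t) (x : Ed d) :
    Tendsto (fun ε : ℝ => ε⁻¹ • (Y t (t + ε) x - x)) (nhdsWithin 0 (Set.Ioi 0))
      (nhds (-(b t x + ℓ t))) := by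
  obtain ⟨Mb, hMb⟩ := ((isCompact_Icc (a := (0:ℝ)) (b := t+1)).prod
    (isCompact_closedBall x 2)).exists_bound_of_continuousOn hb.continuousOn
  obtain ⟨Mℓ, hMℓ⟩ := hℓb (t+1) (by linarith)
  obtain ⟨C, hCdef⟩ : ∃ C : ℝ, C = max Mb 0 + max Mℓ 0 + 1 := ⟨_, rfl⟩
  have hC1 : 1 ≤ C := by
    have := le_max_right Mb 0
    have := le_max_right Mℓ 0
    rw [hCdef]; linarith
  have hCpos : 0 < C := by linarith
  have hCb : ∀ r ∈ Icc 0 (t+1), ∀ w : Ed d, ‖w - x‖ ≤ 2 → ‖b r w + ℓ r‖ ≤ C := by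
    intro r hr w hw
    have h1 : ‖b r w‖ ≤ Mb := hMb (r, w)
      ⟨hr, by simpa [Metric.mem_closedBall, dist_eq_norm] using hw⟩
    have h2 : ‖ℓ r‖ ≤ Mℓ := hMℓ r hr
    have h3 := le_max_left Mb 0
    have h4 := le_max_left Mℓ 0
    calc ‖b r w + ℓ r‖ ≤ ‖b r w‖ + ‖ℓ r‖ := norm_add_le _ _
      _ ≤ C := by rw [hCdef]; linarith
  obtain ⟨h₀, hh₀def⟩ : ∃ h₀ : ℝ, h₀ = 1/(3*C) := ⟨_, rfl⟩
  have hh₀ : 0 < h₀ := by rw [hh₀def]; positivity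
  have hCh₀ : C * h₀ ≤ 1/3 := by
    rw [hh₀def]
    rw [mul_one_div, div_le_div_iff₀ (by linarith) (by norm_num)]
    ring_nf
    linarith
  have hh₀1 : h₀ ≤ 1 := by
    rw [hh₀def, div_le_one (by linarith)]
    linarith
  have hCbx : ∀ r ∈ Icc t (t+h₀), ∀ w : Ed d, ‖w - x‖ ≤ 1 → ‖b r w + ℓ r‖ ≤ C :=
    fun r hr w hw => hCb r ⟨le_trans ht hr.1, by linarith [hr.2]⟩ w (by linarith)
  obtain ⟨hxint, hxbd⟩ := apriori b ℓ X hb hℓm hXeq t ht x C h₀ hC1 hh₀ hCh₀ hCbx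
  obtain ⟨ε₀, hε₀, hjac⟩ := hYjac t ht (‖x‖ + 2) (by positivity) 1 one_pos
  have main : ∀ ε : ℝ, 0 < ε → ε ≤ h₀ → ε < ε₀ →
      (‖Y t (t+ε) x - x‖ ≤ 2*(C*ε)) ∧
      (x = Y t (t+ε) x + ∫ r in t..(t+ε), (b r (X t r (Y t (t+ε) x)) + ℓ r)) ∧
      (∀ r ∈ Icc t (t+ε), ‖X t r (Y t (t+ε) x) - x‖ ≤ 3*(C*ε)) ∧
      IntervalIntegrable (fun r => b r (X t r (Y t (t+ε) x)) + ℓ r)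
        MeasureTheory.volume t (t+ε) := by
    intro ε hε hεh₀ hεε₀
    have htε : t ≤ t + ε := by linarith
    have hCε : C * ε ≤ 1/3 := by nlinarith
    have hXyε : X t (t+ε) (Y t (t+ε) x) = x := hXY t (t+ε) ht htε x
    have hcbd : ‖X t (t+ε) x - x‖ ≤ C * ε := by
      have := hxbd (t+ε) ⟨htε, by linarith⟩
      simpa using this
    have hYd : Differentiable ℝ (Y t (t+ε)) := (hYC1 t (t+ε) ht htε).differentiable one_ne_zero
    have hybd : ‖Y t (t+ε) x - x‖ ≤ 2*(C*ε) := by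
      have hgd : ∀ w ∈ Metric.closedBall (0:Ed d) (‖x‖+2),
          DifferentiableAt ℝ (fun w => Y t (t+ε) w - w) w :=
        fun w _ => (hYd w).sub differentiableAt_id
      have hgder : ∀ w ∈ Metric.closedBall (0:Ed d) (‖x‖+2),
          ‖fderiv ℝ (fun w => Y t (t+ε) w - w) w‖ ≤ 1 := by
        intro w hw
        have hfd : HasFDerivAt (fun w => Y t (t+ε) w - w)
            (fderiv ℝ (Y t (t+ε)) w - ContinuousLinearMap.id ℝ (Ed d)) w :=
          ((hYd w).hasFDerivAt).sub (hasFDerivAt_id w)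
        rw [hfd.fderiv]
        exact hjac ε hε hεε₀ w (by simpa [Metric.mem_closedBall, dist_zero_right] using hw)
      have hxmem : x ∈ Metric.closedBall (0:Ed d) (‖x‖+2) := by
        simp only [Metric.mem_closedBall, dist_zero_right]; linarith
      have hcmem : X t (t+ε) x ∈ Metric.closedBall (0:Ed d) (‖x‖+2) := by
        simp only [Metric.mem_closedBall, dist_zero_right]
        calc ‖X t (t+ε) x‖ = ‖x + (X t (t+ε) x - x)‖ := by congr 1; abel
          _ ≤ ‖x‖ + ‖X t (t+ε) x - x‖ := norm_add_le _ _
          _ ≤ ‖x‖ + 2 := by linarith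
      have hmvt := Convex.norm_image_sub_le_of_norm_fderiv_le hgd hgder
        (convex_closedBall _ _) hcmem hxmem
      rw [hYX t (t+ε) ht htε x, one_mul] at hmvt
      have h5 : ‖Y t (t+ε) x - x‖ ≤
          ‖Y t (t+ε) x - x - (x - X t (t+ε) x)‖ + ‖x - X t (t+ε) x‖ := by
        have := norm_add_le (Y t (t+ε) x - x - (x - X t (t+ε) x)) (x - X t (t+ε) x)
        simpa using this
      have h6 : ‖x - X t (t+ε) x‖ ≤ C * ε := by
        rw [norm_sub_rev]; exact hcbd
      linarith
    have hyx23 : ‖Y t (t+ε) x - x‖ ≤ 2/3 := by linarith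
    have hCby : ∀ r ∈ Icc t (t+h₀), ∀ w : Ed d, ‖w - Y t (t+ε) x‖ ≤ 1 → ‖b r w + ℓ r‖ ≤ C := by
      intro r hr w hw
      refine hCb r ⟨le_trans ht hr.1, by linarith [hr.2]⟩ w ?_
      calc ‖w - x‖ = ‖(w - Y t (t+ε) x) + (Y t (t+ε) x - x)‖ := by congr 1; abel
        _ ≤ ‖w - Y t (t+ε) x‖ + ‖Y t (t+ε) x - x‖ := norm_add_le _ _
        _ ≤ 2 := by linarith
    obtain ⟨hyint, hybd2⟩ := apriori b ℓ X hb hℓm hXeq t ht (Y t (t+ε) x) C h₀ hC1 hh₀ hCh₀ hCby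
    refine ⟨hybd, ?_, ?_, ?_⟩
    · have hXeqy := hXeq t (t+ε) ht htε (Y t (t+ε) x)
      rw [hXyε] at hXeqy
      exact hXeqy
    · intro r hr
      have h1 : ‖X t r (Y t (t+ε) x) - Y t (t+ε) x‖ ≤ C*(r - t) := hybd2 r ⟨hr.1, by linarith [hr.2]⟩
      have h2 : C*(r-t) ≤ C*ε := by nlinarith [hr.2, hr.1]
      calc ‖X t r (Y t (t+ε) x) - x‖ = ‖(X t r (Y t (t+ε) x) - Y t (t+ε) x) + (Y t (t+ε) x - x)‖ := by congr 1; abel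
        _ ≤ ‖X t r (Y t (t+ε) x) - Y t (t+ε) x‖ + ‖Y t (t+ε) x - x‖ := norm_add_le _ _
        _ ≤ 3*(C*ε) := by linarith
    · refine hyint.mono_set ?_
      rw [uIcc_of_le htε, uIcc_of_le (by linarith : t ≤ t+h₀)]
      exact Icc_subset_Icc le_rfl (by linarith)
  rw [Metric.tendsto_nhds]
  intro η hη
  have hbc : ContinuousAt (fun p : ℝ × Ed d => b p.1 p.2) (t, x) := hb.continuousAt
  obtain ⟨δb, hδb, hδbprop⟩ := Metric.continuousAt_iff.1 hbc (η/3) (by linarith)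
  obtain ⟨δl, hδl, hδlprop⟩ := Metric.tendsto_nhdsWithin_nhds.1 (hℓr t ht) (η/3) (by linarith)
  obtain ⟨ε₂, hε₂def⟩ : ∃ e : ℝ, e = min (min h₀ ε₀) (min (δb / (3*C+1)) δl) := ⟨_, rfl⟩
  have hε₂pos : 0 < ε₂ := by
    rw [hε₂def]
    exact lt_min (lt_min hh₀ hε₀) (lt_min (by positivity) hδl)
  filter_upwards [Ioo_mem_nhdsGT_of_mem (⟨le_refl 0, hε₂pos⟩ : (0:ℝ) ∈ Ico 0 ε₂)] with ε hεI
  obtain ⟨hε, hεlt⟩ := hεI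
  rw [hε₂def] at hεlt
  have hεh₀ : ε ≤ h₀ := le_of_lt (lt_of_lt_of_le hεlt (le_trans (min_le_left _ _) (min_le_left _ _)))
  have hεε₀ : ε < ε₀ := lt_of_lt_of_le hεlt (le_trans (min_le_left _ _) (min_le_right _ _))
  have hεδb : ε < δb / (3*C+1) := lt_of_lt_of_le hεlt (le_trans (min_le_right _ _) (min_le_left _ _))
  have hεδl : ε < δl := lt_of_lt_of_le hεlt (le_trans (min_le_right _ _) (min_le_right _ _))
  obtain ⟨hybd, hXeqy, hXtr, hint'⟩ := main ε hε hεh₀ hεε₀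
  have htε : t ≤ t + ε := by linarith
  set yε := Y t (t+ε) x with hyεdef
  have hℓint : IntervalIntegrable ℓ MeasureTheory.volume t (t+ε) := by
    refine (intervalIntegrable_iff_integrableOn_Ioc_of_le htε).2 ?_
    refine Integrable.mono' (g := fun _ => Mℓ)
      (integrableOn_const measure_Ioc_lt_top.ne) hℓm.aestronglyMeasurable ?_
    filter_upwards [ae_restrict_mem measurableSet_Ioc] with ρ hρ
    exact hMℓ ρ ⟨le_trans ht (le_of_lt hρ.1), by linarith [hρ.2]⟩
  have hbXint : IntervalIntegrable (fun r => b r (X t r yε)) MeasureTheory.volume t (t+ε) := by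
    have h := hint'.sub hℓint
    simpa using h
  have hest1 : ‖∫ r in t..(t+ε), (b r (X t r yε) - b t x)‖ ≤ (η/3) * ε := by
    have h := intervalIntegral.norm_integral_le_of_norm_le_const (C := η/3)
      (f := fun r => b r (X t r yε) - b t x) (a := t) (b := t+ε) ?_
    · calc ‖∫ r in t..(t+ε), (b r (X t r yε) - b t x)‖ ≤ η/3 * |t + ε - t| := h
        _ = (η/3) * ε := by rw [show t + ε - t = ε by ring, abs_of_pos hε]
    · intro r hr
      rw [uIoc_of_le htε] at hr
      have h1 : ‖X t r yε - x‖ ≤ 3*(C*ε) := hXtr r ⟨le_of_lt hr.1, hr.2⟩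
      have hεδb' : (3*C+1) * ε < δb := (lt_div_iff₀' (by linarith)).mp hεδb
      have hdist : dist (r, X t r yε) (t, x) < δb := by
        rw [Prod.dist_eq]
        apply max_lt
        · rw [Real.dist_eq, abs_of_pos (by linarith [hr.1])]
          nlinarith [hr.2, hε, hCpos]
        · rw [dist_eq_norm]
          calc ‖X t r yε - x‖ ≤ 3*(C*ε) := h1
            _ < δb := by nlinarith [hε]
      have := hδbprop hdist
      rw [dist_eq_norm] at this
      exact le_of_lt this
  have hest2 : ‖∫ r in t..(t+ε), (ℓ r - ℓ t)‖ ≤ (η/3) * ε := by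
    have h := intervalIntegral.norm_integral_le_of_norm_le_const (C := η/3)
      (f := fun r => ℓ r - ℓ t) (a := t) (b := t+ε) ?_
    · calc ‖∫ r in t..(t+ε), (ℓ r - ℓ t)‖ ≤ η/3 * |t + ε - t| := h
        _ = (η/3) * ε := by rw [show t + ε - t = ε by ring, abs_of_pos hε]
    · intro r hr
      rw [uIoc_of_le htε] at hr
      have hmem : r ∈ Ici t := le_of_lt hr.1
      have hdist : dist r t < δl := by
        rw [Real.dist_eq, abs_of_pos (by linarith [hr.1])]
        linarith [hr.2]
      have := hδlprop hmem hdist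
      rw [dist_eq_norm] at this
      exact le_of_lt this
  have hsplit : (∫ r in t..(t+ε), (b r (X t r yε) + ℓ r)) =
      (∫ r in t..(t+ε), (b r (X t r yε) - b t x)) +
      ((∫ r in t..(t+ε), (ℓ r - ℓ t)) + ε • (b t x + ℓ t)) := by
    have hconst : ∀ c : Ed d, (∫ _ in t..(t+ε), c) = ε • c := by
      intro c
      rw [intervalIntegral.integral_const]
      congr 1
      ring
    have e1 : (∫ r in t..(t+ε), (b r (X t r yε) - b t x)) =
        (∫ r in t..(t+ε), b r (X t r yε)) - ε • b t x := by
      rw [intervalIntegral.integral_sub hbXint intervalIntegrable_const, hconst]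
    have e2 : (∫ r in t..(t+ε), (ℓ r - ℓ t)) =
        (∫ r in t..(t+ε), ℓ r) - ε • ℓ t := by
      rw [intervalIntegral.integral_sub hℓint intervalIntegrable_const, hconst]
    have e3 : (∫ r in t..(t+ε), (b r (X t r yε) + ℓ r)) =
        (∫ r in t..(t+ε), b r (X t r yε)) + (∫ r in t..(t+ε), ℓ r) :=
      intervalIntegral.integral_add hbXint hℓint
    rw [e1, e2, e3, smul_add]
    abel
  rw [dist_eq_norm]
  have hdiff : ε⁻¹ • (yε - x) - (-(b t x + ℓ t)) =
      -(ε⁻¹ • ((∫ r in t..(t+ε), (b r (X t r yε) - b t x)) +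
        (∫ r in t..(t+ε), (ℓ r - ℓ t)))) := by
    have hyx : yε - x = -(∫ r in t..(t+ε), (b r (X t r yε) + ℓ r)) := by
      rw [hXeqy]; abel
    rw [hyx, hsplit]
    rw [smul_neg, smul_add, smul_add, smul_smul, inv_mul_cancel₀ (ne_of_gt hε), one_smul]
    module
  rw [hdiff, norm_neg]
  calc ‖ε⁻¹ • ((∫ r in t..(t+ε), (b r (X t r yε) - b t x)) +
        (∫ r in t..(t+ε), (ℓ r - ℓ t)))‖
      ≤ |ε⁻¹| * (‖∫ r in t..(t+ε), (b r (X t r yε) - b t x)‖ +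
        ‖∫ r in t..(t+ε), (ℓ r - ℓ t)‖) := by
        rw [norm_smul, Real.norm_eq_abs]
        exact mul_le_mul_of_nonneg_left (norm_add_le _ _) (abs_nonneg _)
    _ ≤ ε⁻¹ * ((η/3) * ε + (η/3) * ε) := by
        rw [abs_of_pos (by positivity)]
        exact mul_le_mul_of_nonneg_left (by linarith) (by positivity)
    _ = (2/3) * η := by field_simp; ring
    _ < η := by linarith

set_option maxHeartbeats 1000000 in
open Set in
lemma left_cont {d : ℕ} (b : ℝ → Ed d → Ed d) (ℓ : ℝ → Ed d) (X Y : ℝ → ℝ → Ed d → Ed d)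
    (hXeq : ∀ s t : ℝ, 0 ≤ s → s ≤ t → ∀ x : Ed d,
      X s t x = x + ∫ r in s..t, (b r (X s r x) + ℓ r))
    (hflow : ∀ s r t : ℝ, 0 ≤ s → s ≤ r → r ≤ t → ∀ x : Ed d,
      X s t x = X r t (X s r x))
    (hYC1 : ∀ s t : ℝ, 0 ≤ s → s ≤ t → ContDiff ℝ 1 (Y s t))
    (hXY : ∀ s t : ℝ, 0 ≤ s → s ≤ t → ∀ x : Ed d, X s t (Y s t x) = x)
    (hYX : ∀ s t : ℝ, 0 ≤ s → s ≤ t → ∀ x : Ed d, Y s t (X s t x) = x)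
    (hYloc : ∀ T > (0:ℝ), ∀ R > (0:ℝ), ∃ M : ℝ, ∀ t ∈ Set.Icc (0:ℝ) T,
      ∀ x : Ed d, ‖x‖ ≤ R → ‖Y 0 t x‖ + ‖fderiv ℝ (Y 0 t) x‖ ≤ M)
    (s : ℝ) (hs : 0 < s) (x : Ed d) :
    Tendsto (fun u => Y 0 u x) (nhdsWithin s (Set.Ico 0 s)) (nhds (Y 0 s x)) := by
  obtain ⟨M, hM⟩ := hYloc s hs (‖x‖ + 1) (by positivity)
  have hM0 : 0 ≤ M := by
    have h0 := hM 0 ⟨le_refl 0, le_of_lt hs⟩ 0 (by simp; positivity)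
    have := norm_nonneg (Y 0 0 (0 : Ed d))
    have := norm_nonneg (fderiv ℝ (Y 0 0) (0 : Ed d))
    linarith
  have hp : ∀ u ∈ Ico 0 s, X 0 u (Y 0 s x) =
      x - ∫ r in u..s, (b r (X 0 r (Y 0 s x)) + ℓ r) := by
    intro u hu
    have h1 := hXeq u s hu.1 (le_of_lt hu.2) (X 0 u (Y 0 s x))
    have h2 : X u s (X 0 u (Y 0 s x)) = X 0 s (Y 0 s x) :=
      (hflow 0 u s (le_refl 0) hu.1 (le_of_lt hu.2) (Y 0 s x)).symm
    have h3 : X 0 s (Y 0 s x) = x := hXY 0 s (le_refl 0) (le_of_lt hs) x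
    have h4 : (∫ r in u..s, (b r (X u r (X 0 u (Y 0 s x))) + ℓ r)) =
        ∫ r in u..s, (b r (X 0 r (Y 0 s x)) + ℓ r) := by
      apply intervalIntegral.integral_congr
      intro r hr
      rw [uIcc_of_le (le_of_lt hu.2)] at hr
      show b r (X u r (X 0 u (Y 0 s x))) + ℓ r = b r (X 0 r (Y 0 s x)) + ℓ r
      rw [hflow 0 u r (le_refl 0) hu.1 hr.1 (Y 0 s x)]
    rw [h2, h3, h4] at h1
    exact eq_sub_of_add_eq h1.symm
  have hIto0 : Tendsto (fun u => ∫ r in u..s, (b r (X 0 r (Y 0 s x)) + ℓ r))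
      (nhdsWithin s (Set.Ico 0 s)) (nhds 0) := by
    by_cases hcase : ∃ s₀ ∈ Ico 0 s,
        IntervalIntegrable (fun r => b r (X 0 r (Y 0 s x)) + ℓ r) MeasureTheory.volume s₀ s
    · obtain ⟨s₀, hs₀, hs₀int⟩ := hcase
      have hs₀s : s₀ ≤ s := le_of_lt hs₀.2
      have hev : ∀ᶠ u in nhdsWithin s (Set.Ico 0 s), u ∈ Icc s₀ s := by
        filter_upwards [eventually_mem_nhdsWithin,
          (eventually_gt_nhds hs₀.2).filter_mono nhdsWithin_le_nhds] with u hu1 hu2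
        exact ⟨le_of_lt hu2, le_of_lt hu1.2⟩
      have hcont : ContinuousOn (fun u => ∫ r in s₀..u,
          (b r (X 0 r (Y 0 s x)) + ℓ r)) (uIcc s₀ s) := by
        apply intervalIntegral.continuousOn_primitive_interval
        rw [uIcc_of_le hs₀s]
        exact (integrableOn_Icc_iff_integrableOn_Ioc enorm_ne_top).2
          ((intervalIntegrable_iff_integrableOn_Ioc_of_le hs₀s).1 hs₀int)
      have hcw : ContinuousWithinAt (fun u => ∫ r in s₀..u,
          (b r (X 0 r (Y 0 s x)) + ℓ r)) (uIcc s₀ s) s :=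
        hcont s (by rw [uIcc_of_le hs₀s]; exact ⟨hs₀s, le_refl s⟩)
      have hle : nhdsWithin s (Set.Ico 0 s) ≤ nhdsWithin s (uIcc s₀ s) := by
        rw [uIcc_of_le hs₀s]
        exact nhdsWithin_le_of_mem hev
      have h6 : Tendsto (fun u => ∫ r in s₀..u, (b r (X 0 r (Y 0 s x)) + ℓ r))
          (nhdsWithin s (Set.Ico 0 s))
          (nhds (∫ r in s₀..s, (b r (X 0 r (Y 0 s x)) + ℓ r))) :=
        hcw.mono_left hle
      have h5 := tendsto_const_nhds (f := nhdsWithin s (Set.Ico 0 s))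
        (x := (∫ r in s₀..s, (b r (X 0 r (Y 0 s x)) + ℓ r))) |>.sub h6
      rw [sub_self] at h5
      refine Tendsto.congr' ?_ h5
      filter_upwards [hev] with u hu
      have hi1 : IntervalIntegrable (fun r => b r (X 0 r (Y 0 s x)) + ℓ r)
          MeasureTheory.volume s₀ u := hs₀int.mono_set
        (by rw [uIcc_of_le hu.1, uIcc_of_le hs₀s]; exact Icc_subset_Icc le_rfl hu.2)
      have hi2 : IntervalIntegrable (fun r => b r (X 0 r (Y 0 s x)) + ℓ r)
          MeasureTheory.volume u s := hs₀int.mono_set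
        (by rw [uIcc_of_le hu.2, uIcc_of_le hs₀s]; exact Icc_subset_Icc hu.1 le_rfl)
      have := intervalIntegral.integral_add_adjacent_intervals hi1 hi2
      exact (eq_sub_of_add_eq' this).symm
    · push_neg at hcase
      have hev : ∀ᶠ u in nhdsWithin s (Set.Ico 0 s),
          (∫ r in u..s, (b r (X 0 r (Y 0 s x)) + ℓ r)) = 0 := by
        filter_upwards [eventually_mem_nhdsWithin] with u hu
        exact intervalIntegral.integral_undef (hcase u hu)
      exact Tendsto.congr' (hev.mono fun u hu => hu.symm) tendsto_const_nhds
  have hXw : Tendsto (fun u => X 0 u (Y 0 s x)) (nhdsWithin s (Set.Ico 0 s)) (nhds x) := by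
    have h7 := (tendsto_const_nhds (x := x)
      (f := nhdsWithin s (Set.Ico 0 s))).sub hIto0
    rw [sub_zero] at h7
    refine Tendsto.congr' ?_ h7
    filter_upwards [eventually_mem_nhdsWithin] with u hu
    exact (hp u hu).symm
  rw [tendsto_iff_norm_sub_tendsto_zero]
  have hnorm0 : Tendsto (fun u => ‖X 0 u (Y 0 s x) - x‖)
      (nhdsWithin s (Set.Ico 0 s)) (nhds 0) :=
    tendsto_iff_norm_sub_tendsto_zero.1 hXw
  have hbound : ∀ᶠ u in nhdsWithin s (Set.Ico 0 s),
      ‖Y 0 u x - Y 0 s x‖ ≤ M * ‖x - X 0 u (Y 0 s x)‖ := by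
    filter_upwards [hnorm0.eventually_lt_const (by norm_num : (0:ℝ) < 1),
      eventually_mem_nhdsWithin] with u hsmall hu
    have hYd : Differentiable ℝ (Y 0 u) := (hYC1 0 u (le_refl 0) hu.1).differentiable one_ne_zero
    have hder : ∀ z ∈ Metric.closedBall (0:Ed d) (‖x‖+1), ‖fderiv ℝ (Y 0 u) z‖ ≤ M := by
      intro z hz
      have h8 := hM u ⟨hu.1, le_of_lt hu.2⟩ z
        (by simpa [Metric.mem_closedBall, dist_zero_right] using hz)
      linarith [norm_nonneg (Y 0 u z)]
    have hxmem : x ∈ Metric.closedBall (0:Ed d) (‖x‖+1) := by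
      simp only [Metric.mem_closedBall, dist_zero_right]; linarith
    have hpmem : X 0 u (Y 0 s x) ∈ Metric.closedBall (0:Ed d) (‖x‖+1) := by
      simp only [Metric.mem_closedBall, dist_zero_right]
      calc ‖X 0 u (Y 0 s x)‖ = ‖x + (X 0 u (Y 0 s x) - x)‖ := by congr 1; abel
        _ ≤ ‖x‖ + ‖X 0 u (Y 0 s x) - x‖ := norm_add_le _ _
        _ ≤ ‖x‖ + 1 := by linarith [le_of_lt hsmall]
    have hmvt := Convex.norm_image_sub_le_of_norm_fderiv_le
      (fun z _ => (hYd z)) hder (convex_closedBall _ _) hpmem hxmem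
    rw [hYX 0 u (le_refl 0) hu.1 (Y 0 s x)] at hmvt
    exact hmvt
  have hrhs : Tendsto (fun u => M * ‖x - X 0 u (Y 0 s x)‖)
      (nhdsWithin s (Set.Ico 0 s)) (nhds 0) := by
    have h9 : Tendsto (fun u => ‖x - X 0 u (Y 0 s x)‖)
        (nhdsWithin s (Set.Ico 0 s)) (nhds 0) := by
      refine Tendsto.congr (fun u => (norm_sub_rev _ _)) hnorm0
    have := tendsto_const_nhds (x := M) (f := nhdsWithin s (Set.Ico 0 s)) |>.mul h9
    simpa using this
  exact squeeze_zero' (Filter.Eventually.of_forall fun u => norm_nonneg _) hbound hrhs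
open Set in
lemma Ioi_diff_singleton (a : ℝ) : Set.Ioi a \ {a} = Set.Ioi a :=
  Set.diff_singleton_eq_self (by simp)

open Set in
lemma shift_tendsto (u : ℝ) : Tendsto (fun u' => u' - u) (nhdsWithin u (Set.Ioi u))
    (nhdsWithin 0 (Set.Ioi 0)) := by
  refine tendsto_nhdsWithin_of_tendsto_nhds_of_eventually_within _ ?_ ?_
  · have h1 : Tendsto (fun u' : ℝ => u' - u) (nhds u) (nhds (u - u)) :=
      (continuous_id.sub continuous_const).tendsto u
    rw [sub_self] at h1
    exact h1.mono_left nhdsWithin_le_nhds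
  · filter_upwards [eventually_mem_nhdsWithin] with u' hu'
    exact sub_pos.2 (Set.mem_Ioi.1 hu')

open Set in
lemma right_deriv_of_quot (g : ℝ → ℝ) (u L : ℝ)
    (h : Tendsto (fun ε => (g (u+ε) - g u)/ε) (nhdsWithin 0 (Set.Ioi 0)) (nhds L)) :
    HasDerivWithinAt g L (Set.Ioi u) u := by
  rw [hasDerivWithinAt_iff_tendsto_slope, Ioi_diff_singleton]
  refine Tendsto.congr' ?_ (h.comp (shift_tendsto u))
  filter_upwards [eventually_mem_nhdsWithin] with u' hu'
  simp only [Function.comp_apply]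
  rw [slope_def_module, smul_eq_mul, div_eq_inv_mul, add_sub_cancel]

open Set in
lemma right_cont_of_quot (g : ℝ → ℝ) (s L : ℝ) (hs : 0 ≤ s)
    (h : Tendsto (fun ε => (g (s+ε) - g s)/ε) (nhdsWithin 0 (Set.Ioi 0)) (nhds L)) :
    ContinuousWithinAt g (Set.Ici s) s := by
  rw [← continuousWithinAt_Ioi_iff_Ici]
  have hid : Tendsto (fun ε : ℝ => ε) (nhdsWithin 0 (Set.Ioi 0)) (nhds 0) :=
    tendsto_id.mono_left nhdsWithin_le_nhds
  have h4 : Tendsto (fun ε : ℝ => g (s+ε) - g s) (nhdsWithin 0 (Set.Ioi 0)) (nhds 0) := by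
    have h5 := hid.mul h
    rw [zero_mul] at h5
    refine Tendsto.congr' ?_ h5
    filter_upwards [eventually_mem_nhdsWithin] with ε hε
    have hεne : (ε:ℝ) ≠ 0 := ne_of_gt hε
    field_simp
  have h6 := h4.comp (shift_tendsto s)
  have h7 : Tendsto (fun u => g u - g s) (nhdsWithin s (Set.Ioi s)) (nhds 0) := by
    refine Tendsto.congr (fun u => ?_) h6
    simp only [Function.comp_apply]
    rw [add_sub_cancel]
  have h8 := h7.add (tendsto_const_nhds (x := g s))
  rw [zero_add] at h8
  refine Tendsto.congr (fun u => by ring) h8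

open Set in
lemma contOn_glue (g : ℝ → ℝ)
    (hright : ∀ s : ℝ, 0 ≤ s → ContinuousWithinAt g (Set.Ici s) s)
    (hleft : ∀ s : ℝ, 0 < s → Tendsto g (nhdsWithin s (Set.Ico 0 s)) (nhds (g s))) :
    ContinuousOn g (Set.Ici 0) := by
  intro s hs
  rcases eq_or_lt_of_le (Set.mem_Ici.1 hs) with hs0 | hs0
  · exact (hright s hs).mono (by rw [← hs0])
  · have hleftcw : ContinuousWithinAt g (Set.Icc 0 s) s := by
      rw [← Set.Ico_insert_right hs]
      exact continuousWithinAt_insert_self.2 (hleft s hs0)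
    have := hleftcw.union (hright s hs)
    refine this.mono fun u hu => ?_
    rcases le_or_gt u s with h | h
    · exact Or.inl ⟨hu, h⟩
    · exact Or.inr (le_of_lt h)

set_option maxHeartbeats 1000000 in
open Set in
lemma negd_intervalIntegrable (g dd : ℝ → ℝ) (t K : ℝ) (h0 : 0 < t)
    (hcont : ContinuousOn g (Set.Ici 0))
    (hlim : ∀ u : ℝ, 0 ≤ u → Tendsto (fun ε => (g (u+ε) - g u)/ε)
      (nhdsWithin 0 (Set.Ioi 0)) (nhds (-dd u)))
    (hbd : ∀ u ∈ Set.Icc (0:ℝ) t, |dd u| ≤ K) :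
    IntervalIntegrable (fun u => -(dd u)) MeasureTheory.volume 0 t := by
  have hgA : ∀ n : ℕ, ContinuousOn
      (fun u => ((n:ℝ)+1) * (g (u + 1/((n:ℝ)+1)) - g u)) (Set.Ici 0) := by
    intro n
    have h1 : ContinuousOn (fun u : ℝ => g (u + 1/((n:ℝ)+1))) (Set.Ici 0) := by
      refine hcont.comp ((continuous_id.add continuous_const).continuousOn) ?_
      intro u hu
      simp only [Set.mem_Ici] at hu ⊢
      have : (0:ℝ) < 1/((n:ℝ)+1) := by positivity
      linarith
    exact continuousOn_const.mul (h1.sub hcont)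
  have hptwise : ∀ u ∈ Set.Ici (0:ℝ),
      Tendsto (fun n : ℕ => ((n:ℝ)+1) * (g (u + 1/((n:ℝ)+1)) - g u)) atTop
      (nhds (-dd u)) := by
    intro u hu
    have hseq : Tendsto (fun n : ℕ => 1/((n:ℝ)+1)) atTop (nhdsWithin 0 (Set.Ioi 0)) := by
      refine tendsto_nhdsWithin_of_tendsto_nhds_of_eventually_within _
        tendsto_one_div_add_atTop_nhds_zero_nat ?_
      exact Filter.Eventually.of_forall fun n => Set.mem_Ioi.2 (by positivity)
    have h4 := (hlim u hu).comp hseq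
    refine Tendsto.congr (fun n => ?_) h4
    simp only [Function.comp_apply]
    rw [one_div, div_eq_mul_inv, inv_inv, mul_comm]
  have hAESM : MeasureTheory.AEStronglyMeasurable (fun u => -(dd u))
      (MeasureTheory.volume.restrict (Set.Ioc 0 t)) := by
    refine aestronglyMeasurable_of_tendsto_ae atTop
      (f := fun (n : ℕ) (u : ℝ) => ((n:ℝ)+1) * (g (u + 1/((n:ℝ)+1)) - g u)) ?_ ?_
    · intro n
      exact ((hgA n).mono (fun u hu => le_of_lt hu.1)).aestronglyMeasurable measurableSet_Ioc
    · refine (MeasureTheory.ae_restrict_iff' measurableSet_Ioc).2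
        (MeasureTheory.ae_of_all _ fun u hu => hptwise u (le_of_lt hu.1))
  rw [intervalIntegrable_iff_integrableOn_Ioc_of_le (le_of_lt h0)]
  refine MeasureTheory.Integrable.mono' (g := fun _ => K)
    (MeasureTheory.integrableOn_const measure_Ioc_lt_top.ne) hAESM ?_
  filter_upwards [MeasureTheory.ae_restrict_mem measurableSet_Ioc] with u hu
  rw [norm_neg, Real.norm_eq_abs]
  exact hbd u ⟨le_of_lt hu.1, hu.2⟩

set_option maxHeartbeats 1000000 in
theorem random_transport_deterministic_core
    (d : ℕ) (hd : 1 ≤ d)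
    (b : ℝ → Ed d → Ed d) (ℓ : ℝ → Ed d)
    (hb : Continuous fun p : ℝ × Ed d => b p.1 p.2)
    (hℓr : ∀ t : ℝ, 0 ≤ t → Tendsto ℓ (nhdsWithin t (Set.Ici t)) (nhds (ℓ t)))
    (hℓm : Measurable ℓ)
    (hℓb : ∀ T : ℝ, 0 < T → ∃ M : ℝ, ∀ t ∈ Set.Icc (0:ℝ) T, ‖ℓ t‖ ≤ M)
    (X Y : ℝ → ℝ → Ed d → Ed d)
    -- (a) integral equation for the flow
    (hXeq : ∀ s t : ℝ, 0 ≤ s → s ≤ t → ∀ x : Ed d,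
      X s t x = x + ∫ r in s..t, (b r (X s r x) + ℓ r))
    -- (b) flow property
    (hflow : ∀ s r t : ℝ, 0 ≤ s → s ≤ r → r ≤ t → ∀ x : Ed d,
      X s t x = X r t (X s r x))
    -- (c) each X_{s,t} is a C¹-diffeomorphism with inverse Y_{s,t}
    (hXC1 : ∀ s t : ℝ, 0 ≤ s → s ≤ t → ContDiff ℝ 1 (X s t))
    (hYC1 : ∀ s t : ℝ, 0 ≤ s → s ≤ t → ContDiff ℝ 1 (Y s t))
    (hXY : ∀ s t : ℝ, 0 ≤ s → s ≤ t → ∀ x : Ed d, X s t (Y s t x) = x)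
    (hYX : ∀ s t : ℝ, 0 ≤ s → s ≤ t → ∀ x : Ed d, Y s t (X s t x) = x)
    -- (d) regularity of the inverse maps
    (hYjac : ∀ t : ℝ, 0 ≤ t → ∀ R > (0:ℝ), ∀ δ > (0:ℝ), ∃ ε₀ > (0:ℝ),
      ∀ ε : ℝ, 0 < ε → ε < ε₀ → ∀ x : Ed d, ‖x‖ ≤ R →
        ‖fderiv ℝ (Y t (t + ε)) x - ContinuousLinearMap.id ℝ (Ed d)‖ ≤ δ)
    (hYloc : ∀ T > (0:ℝ), ∀ R > (0:ℝ), ∃ M : ℝ, ∀ t ∈ Set.Icc (0:ℝ) T,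
      ∀ x : Ed d, ‖x‖ ≤ R → ‖Y 0 t x‖ + ‖fderiv ℝ (Y 0 t) x‖ ≤ M)
    -- the data
    (φ : Ed d → ℝ) (hφ : ContDiff ℝ 1 φ)
    (hφb : ∃ M : ℝ, ∀ x : Ed d, |φ x| + ‖fderiv ℝ φ x‖ ≤ M) :
    -- conclusions for u(t,x) := φ(Y 0 t x)
    (∀ x : Ed d, φ (Y 0 0 x) = φ x) ∧
    (∀ t : ℝ, 0 ≤ t → ContDiff ℝ 1 fun x : Ed d => φ (Y 0 t x)) ∧
    (∀ t : ℝ, 0 ≤ t → ∀ x : Ed d,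
      Tendsto (fun ε : ℝ => (φ (Y 0 (t + ε) x) - φ (Y 0 t x)) / ε)
        (nhdsWithin 0 (Set.Ioi 0))
        (nhds (-(fderiv ℝ (fun y : Ed d => φ (Y 0 t y)) x (b t x + ℓ t))))) ∧
    (∀ t : ℝ, 0 ≤ t → ∀ x : Ed d,
      φ (Y 0 t x) = φ x - ∫ s in (0:ℝ)..t,
        fderiv ℝ (fun y : Ed d => φ (Y 0 s y)) x (b s x + ℓ s)) := by
  have hX00 : ∀ z : Ed d, X 0 0 z = z := by
    intro z
    rw [hXeq 0 0 le_rfl le_rfl z, intervalIntegral.integral_same, add_zero]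
  have hY00 : ∀ z : Ed d, Y 0 0 z = z := by
    intro z
    conv_lhs => rw [← hX00 z]
    exact hYX 0 0 le_rfl le_rfl z
  have hconc1 : ∀ x : Ed d, φ (Y 0 0 x) = φ x := fun x => by rw [hY00 x]
  have hconc2 : ∀ t : ℝ, 0 ≤ t → ContDiff ℝ 1 fun x : Ed d => φ (Y 0 t x) :=
    fun t ht => hφ.comp (hYC1 0 t le_rfl ht)
  have hYtt : ∀ t : ℝ, 0 ≤ t → ∀ z : Ed d, Y t t z = z := by
    intro t ht z
    have hXtt : X t t z = z := by
      rw [hXeq t t ht le_rfl z, intervalIntegral.integral_same, add_zero]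
    conv_lhs => rw [← hXtt]
    exact hYX t t ht le_rfl z
  have hYcomp : ∀ t : ℝ, 0 ≤ t → ∀ ε : ℝ, 0 ≤ ε → ∀ z : Ed d,
      Y 0 (t+ε) z = Y 0 t (Y t (t+ε) z) := by
    intro t ht ε hε z
    have htε : t ≤ t + ε := by linarith
    have h0tε : (0:ℝ) ≤ t + ε := by linarith
    have h1 : X 0 (t+ε) (Y 0 t (Y t (t+ε) z)) = z := by
      rw [hflow 0 t (t+ε) le_rfl ht htε, hXY 0 t le_rfl ht, hXY t (t+ε) ht htε]
    calc Y 0 (t+ε) z = Y 0 (t+ε) (X 0 (t+ε) (Y 0 t (Y t (t+ε) z))) := by rw [h1]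
      _ = Y 0 t (Y t (t+ε) z) := hYX 0 (t+ε) le_rfl h0tε _
  have hconc3 : ∀ t : ℝ, 0 ≤ t → ∀ x : Ed d,
      Tendsto (fun ε : ℝ => (φ (Y 0 (t + ε) x) - φ (Y 0 t x)) / ε)
        (nhdsWithin 0 (Set.Ioi 0))
        (nhds (-(fderiv ℝ (fun y : Ed d => φ (Y 0 t y)) x (b t x + ℓ t)))) := by
    intro t ht x
    have hvdiff : HasFDerivAt (fun y : Ed d => φ (Y 0 t y))
        (fderiv ℝ (fun y : Ed d => φ (Y 0 t y)) x) x :=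
      (((hconc2 t ht).differentiable one_ne_zero) x).hasFDerivAt
    have hslope : HasDerivWithinAt (fun ε => Y t (t+ε) x) (-(b t x + ℓ t)) (Set.Ioi 0) 0 := by
      rw [hasDerivWithinAt_iff_tendsto_slope, Ioi_diff_singleton]
      have hcore := deriv_core b ℓ X Y hb hℓr hℓm hℓb hXeq hYC1 hXY hYX hYjac t ht x
      refine Tendsto.congr (fun ε => ?_) hcore
      rw [slope_def_module, sub_zero, add_zero, hYtt t ht x]
    have hvAt : HasFDerivAt (fun y : Ed d => φ (Y 0 t y))
        (fderiv ℝ (fun y : Ed d => φ (Y 0 t y)) x) ((fun ε : ℝ => Y t (t+ε) x) 0) := by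
      have hw0 : (fun ε : ℝ => Y t (t+ε) x) 0 = x := by
        simp only [add_zero]
        exact hYtt t ht x
      rw [hw0]; exact hvdiff
    have hcomp := HasFDerivAt.comp_hasDerivWithinAt 0 hvAt hslope
    rw [hasDerivWithinAt_iff_tendsto_slope, Ioi_diff_singleton] at hcomp
    rw [map_neg] at hcomp
    refine Tendsto.congr' ?_ hcomp
    filter_upwards [eventually_mem_nhdsWithin] with ε hε
    rw [slope_def_module, Function.comp_apply, Function.comp_apply, sub_zero, add_zero,
      hYtt t ht x, ← hYcomp t ht ε (le_of_lt hε) x, smul_eq_mul, div_eq_inv_mul]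
  refine ⟨hconc1, hconc2, hconc3, ?_⟩
  intro t ht x
  rcases eq_or_lt_of_le ht with h0 | h0
  · rw [← h0, intervalIntegral.integral_same, hY00 x, sub_zero]
  have hcont : ContinuousOn (fun u => φ (Y 0 u x)) (Set.Ici 0) := by
    refine contOn_glue _ ?_ ?_
    · intro s hs
      exact right_cont_of_quot _ s _ hs (hconc3 s hs x)
    · intro s hs0
      have h1 := left_cont b ℓ X Y hXeq hflow hYC1 hXY hYX hYloc s hs0 x
      exact (hφ.continuous.tendsto _).comp h1
  have hder : ∀ u ∈ Set.Ioo (0:ℝ) t, HasDerivWithinAt (fun u => φ (Y 0 u x))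
      (-(fderiv ℝ (fun y : Ed d => φ (Y 0 u y)) x (b u x + ℓ u))) (Set.Ioi u) u :=
    fun u hu => right_deriv_of_quot _ u _ (hconc3 u (le_of_lt hu.1) x)
  obtain ⟨Mφ, hMφ⟩ := hφb
  obtain ⟨MY, hMY⟩ := hYloc t h0 (‖x‖+1) (by positivity)
  obtain ⟨Mb2, hMb2⟩ := (isCompact_Icc (a := (0:ℝ)) (b := t)).exists_bound_of_continuousOn
    ((hb.comp (continuous_id.prodMk continuous_const)).continuousOn (s := Set.Icc 0 t))
  obtain ⟨Mℓ2, hMℓ2⟩ := hℓb t h0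
  have hd'bd : ∀ u ∈ Set.Icc (0:ℝ) t,
      |fderiv ℝ (fun y : Ed d => φ (Y 0 u y)) x (b u x + ℓ u)| ≤ Mφ * MY * (Mb2 + Mℓ2) := by
    intro u hu
    have hφd : DifferentiableAt ℝ φ (Y 0 u x) := (hφ.differentiable one_ne_zero) _
    have hYd : DifferentiableAt ℝ (Y 0 u) x :=
      ((hYC1 0 u le_rfl hu.1).differentiable one_ne_zero) x
    have hchain : fderiv ℝ (fun y : Ed d => φ (Y 0 u y)) x =
        (fderiv ℝ φ (Y 0 u x)).comp (fderiv ℝ (Y 0 u) x) := fderiv_comp x hφd hYd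
    have h1 : ‖fderiv ℝ φ (Y 0 u x)‖ ≤ Mφ := by
      have := hMφ (Y 0 u x)
      have := abs_nonneg (φ (Y 0 u x))
      linarith
    have h2 : ‖fderiv ℝ (Y 0 u) x‖ ≤ MY := by
      have := hMY u hu x (by linarith)
      linarith [norm_nonneg (Y 0 u x)]
    have h3 : ‖b u x + ℓ u‖ ≤ Mb2 + Mℓ2 := by
      have hb1 : ‖b u x‖ ≤ Mb2 := hMb2 u hu
      have hb2 : ‖ℓ u‖ ≤ Mℓ2 := hMℓ2 u hu
      calc ‖b u x + ℓ u‖ ≤ ‖b u x‖ + ‖ℓ u‖ := norm_add_le _ _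
        _ ≤ Mb2 + Mℓ2 := by linarith
    have h4 : ‖fderiv ℝ (fun y : Ed d => φ (Y 0 u y)) x‖ ≤ Mφ * MY := by
      rw [hchain]
      calc ‖(fderiv ℝ φ (Y 0 u x)).comp (fderiv ℝ (Y 0 u) x)‖
          ≤ ‖fderiv ℝ φ (Y 0 u x)‖ * ‖fderiv ℝ (Y 0 u) x‖ :=
            ContinuousLinearMap.opNorm_comp_le _ _
        _ ≤ Mφ * MY := by
            apply mul_le_mul h1 h2 (norm_nonneg _)
            linarith [norm_nonneg (fderiv ℝ φ (Y 0 u x))]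
    calc |fderiv ℝ (fun y : Ed d => φ (Y 0 u y)) x (b u x + ℓ u)|
        = ‖fderiv ℝ (fun y : Ed d => φ (Y 0 u y)) x (b u x + ℓ u)‖ :=
          (Real.norm_eq_abs _).symm
      _ ≤ ‖fderiv ℝ (fun y : Ed d => φ (Y 0 u y)) x‖ * ‖b u x + ℓ u‖ :=
          ContinuousLinearMap.le_opNorm _ _
      _ ≤ Mφ * MY * (Mb2 + Mℓ2) := by
          apply mul_le_mul h4 h3 (norm_nonneg _)
          have := norm_nonneg (fderiv ℝ φ (Y 0 u x))
          have := norm_nonneg (fderiv ℝ (Y 0 u) x)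
          nlinarith
  have hint : IntervalIntegrable
      (fun u => -(fderiv ℝ (fun y : Ed d => φ (Y 0 u y)) x (b u x + ℓ u)))
      MeasureTheory.volume 0 t :=
    negd_intervalIntegrable (fun u => φ (Y 0 u x))
      (fun u => fderiv ℝ (fun y : Ed d => φ (Y 0 u y)) x (b u x + ℓ u))
      t (Mφ * MY * (Mb2 + Mℓ2)) h0 hcont (fun u hu => hconc3 u hu x) hd'bd
  have hgc : ContinuousOn (fun u => φ (Y 0 u x)) (Set.Icc 0 t) :=
    hcont.mono (fun u hu => hu.1)
  have hFTC := intervalIntegral.integral_eq_sub_of_hasDeriv_right_of_le (le_of_lt h0)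
    hgc hder hint
  rw [intervalIntegral.integral_neg] at hFTC
  have hg0 : φ (Y 0 0 x) = φ x := hconc1 x
  rw [hg0] at hFTC
  linarith [hFTC]
end
end
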